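/- arXiv:1305.4905 — 3 statements merged into one kernel-verified Lean document; each statement's English description precedes it below -/
import Mathlib

section
/- Let q be a prime power and let D be a 2-minimal acyclic multicast network with subtree graph H. If H has a proper coloring with q + 1 colors, then D admits a rate-2 linear coding solution over the finite field F_q. -/
namespace NCMinor

variable {V A : Type}

/-- `IsArcWalk tl hd u v p` : the list of arcs `p` forms a directed walk from `u` to `v`
in the multigraph with tail map `tl` and head map `hd`. -/
def IsArcWalk (tl hd : A → V) : V → V → List A → Prop
  | u, v, [] => u = v
  | u, v, a :: p => tl a = u ∧ IsArcWalk tl hd (hd a) v p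

/-- `lam tl hd s v` : the maximum number of pairwise arc-disjoint directed paths
from `s` to `v`. -/
noncomputable def lam (tl hd : A → V) (s v : V) : ℕ :=
  sSup {k | ∃ P : Fin k → List A,
    (∀ i, IsArcWalk tl hd s v (P i)) ∧
    ∀ i j : Fin k, i ≠ j → ∀ a, a ∈ P i → a ∉ P j}

/-- in-degree -/
noncomputable def inDeg (hd : A → V) (v : V) : ℕ := {a | hd a = v}.ncard

/-- `cutVal tl hd U` : number of arcs entering the node set `U` from outside. -/
noncomputable def cutVal (tl hd : A → V) (U : Set V) : ℕ :=
  {a | tl a ∉ U ∧ hd a ∈ U}.ncard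

/-- `eta tl hd s u v` : minimum value of a cut separating `{u, v}` from `s`. -/
noncomputable def eta (tl hd : A → V) (s u v : V) : ℕ :=
  sInf {k | ∃ U : Set V, u ∈ U ∧ v ∈ U ∧ s ∉ U ∧ cutVal tl hd U = k}

def Acyclic (tl hd : A → V) : Prop := ∀ v p, IsArcWalk tl hd v v p → p = []

/-- deleting any arc decreases the max-flow to some node. -/
def LinkMinimal (tl hd : A → V) (s : V) : Prop :=
  ∀ a : A, ∃ v : V,
    lam (fun b : {b : A // b ≠ a} => tl b.1) (fun b => hd b.1) s v < lam tl hd s v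

/-- rate 2 is feasible to every receiver, but infeasible after deleting any arc. -/
def TwoMinimal (tl hd : A → V) (s : V) (T : Set V) : Prop :=
  (∀ t ∈ T, 2 ≤ lam tl hd s t) ∧
  ∀ a : A, ∃ t ∈ T,
    lam (fun b : {b : A // b ≠ a} => tl b.1) (fun b => hd b.1) s t < 2

/-- a rate-2 linear coding solution over the field `F`. -/
def IsCodingSolution (tl hd : A → V) (s : V) (T : Set V) {F : Type} [Field F]
    (φ : A → F × F) : Prop :=
  (∀ a, φ a ≠ 0) ∧
  (∀ a, tl a ≠ s → φ a ∈ Submodule.span F (φ '' {b | hd b = tl a})) ∧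
  (∀ t ∈ T, Submodule.span F (φ '' {b | hd b = t}) = ⊤)

/-- generating relation of the subtree decomposition: consecutive arcs through an
in-degree-1 node lie in the same class. -/
def SubtreeRel (tl hd : A → V) (a b : A) : Prop :=
  hd a = tl b ∧ inDeg hd (hd a) = 1

/-- the subtrees: classes of arcs generated by `SubtreeRel`. -/
def Subtrees (tl hd : A → V) : Type := Quot (SubtreeRel tl hd)

/-- the subtree graph: two subtrees are adjacent iff some node of in-degree 2 has one
incoming arc in each. -/
def subtreeGraph (tl hd : A → V) : SimpleGraph (Subtrees tl hd) where
  Adj x y := x ≠ y ∧ ∃ a b : A,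
    Quot.mk _ a = x ∧ Quot.mk _ b = y ∧ hd a = hd b ∧ inDeg hd (hd a) = 2
  symm := by
    constructor
    rintro x y ⟨hxy, a, b, ha, hb, hab, hdeg⟩
    exact ⟨hxy.symm, b, a, hb, ha, hab.symm, hab ▸ hdeg⟩
  loopless := by constructor; rintro x ⟨hxx, -⟩; exact hxx rfl

/-- the underlying (undirected, simple) topology of the network. -/
def topology (tl hd : A → V) : SimpleGraph V where
  Adj u v := u ≠ v ∧ ∃ a, (tl a = u ∧ hd a = v) ∨ (tl a = v ∧ hd a = u)
  symm := by constructor; rintro u v ⟨huv, a, h⟩; exact ⟨huv.symm, a, h.symm⟩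
  loopless := by constructor; rintro u ⟨h, -⟩; exact h rfl

/-- graph minor via branch sets. -/
def IsMinor {W : Type} (M : SimpleGraph W) (G : SimpleGraph V) : Prop :=
  ∃ B : W → Set V,
    (∀ m, (G.induce (B m)).Connected) ∧
    (Pairwise fun m m' => Disjoint (B m) (B m')) ∧
    ∀ m m', M.Adj m m' → ∃ u ∈ B m, ∃ v ∈ B m', G.Adj u v

/-- `S` is the arc set of an `s`-rooted out-tree. -/
def IsOutTree (tl hd : A → V) (s : V) (S : Set A) : Prop :=
  (∀ a ∈ S, hd a ≠ s) ∧
  Set.InjOn hd S ∧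
  ∀ a ∈ S, ∃ p : List A, (∀ b ∈ p, b ∈ S) ∧ IsArcWalk tl hd s (tl a) p

/-- node `v` belongs to the out-tree with root `s` and arc set `S`. -/
def MemTree (tl hd : A → V) (s : V) (S : Set A) (v : V) : Prop :=
  v = s ∨ ∃ a ∈ S, hd a = v ∨ tl a = v

/-- tree decomposition of the graph `G` with host tree `H` and bags `B`. -/
structure IsTreeDecomp (G : SimpleGraph V) {X : Type} (H : SimpleGraph X)
    (B : X → Set V) : Prop where
  isTree : H.IsTree
  mem_bag : ∀ v, ∃ x, v ∈ B x
  edge_bag : ∀ u v, G.Adj u v → ∃ x, u ∈ B x ∧ v ∈ B x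
  bag_connected : ∀ v : V, (H.induce {x | v ∈ B x}).Connected

/-- size of a largest clique. -/
noncomputable def cliqueNumber {W : Type} (G : SimpleGraph W) : ℕ :=
  sSup {n | ∃ t : Finset W, G.IsNClique n t}

end NCMinor

namespace NCMinor

variable {V A : Type} {tl hd : A → V} {s t u v : V}

theorem isArcWalk_nil : IsArcWalk tl hd u v [] ↔ u = v := Iff.rfl

theorem isArcWalk_cons {a : A} {p : List A} :
    IsArcWalk tl hd u v (a :: p) ↔ tl a = u ∧ IsArcWalk tl hd (hd a) v p := Iff.rfl

theorem isArcWalk_append {p q : List A} :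
    IsArcWalk tl hd u v (p ++ q) ↔ ∃ w, IsArcWalk tl hd u w p ∧ IsArcWalk tl hd w v q := by
  induction p generalizing u with
  | nil =>
    simp only [List.nil_append]
    constructor
    · exact fun h => ⟨u, rfl, h⟩
    · rintro ⟨w, rfl, h⟩; exact h
  | cons a p ih =>
    simp only [List.cons_append, isArcWalk_cons, ih]
    tauto

theorem IsArcWalk.split {p : List A} {a : A} (h : IsArcWalk tl hd u v p) (ha : a ∈ p) :
    ∃ p₁ p₂, p = p₁ ++ a :: p₂ ∧ IsArcWalk tl hd u (tl a) p₁ ∧ IsArcWalk tl hd (hd a) v p₂ := by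
  obtain ⟨p₁, p₂, rfl⟩ := List.append_of_mem ha
  obtain ⟨w, h1, h2⟩ := isArcWalk_append.1 h
  obtain ⟨hw, h2'⟩ := isArcWalk_cons.1 h2
  exact ⟨p₁, p₂, rfl, hw ▸ h1, h2'⟩

theorem IsArcWalk.exists_last {p : List A} (h : IsArcWalk tl hd u v p) (hp : p ≠ []) :
    ∃ e ∈ p, hd e = v := by
  induction p generalizing u with
  | nil => exact absurd rfl hp
  | cons a q ih =>
    obtain ⟨-, h2⟩ := isArcWalk_cons.1 h
    rcases eq_or_ne q [] with rfl | hq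
    · exact ⟨a, List.mem_cons_self, h2⟩
    · obtain ⟨e, he, hev⟩ := ih h2 hq
      exact ⟨e, List.mem_cons_of_mem _ he, hev⟩

/-- a closed nonempty walk contradicts acyclicity -/
theorem Acyclic.no_closed (hacyc : Acyclic tl hd) {p : List A}
    (h : IsArcWalk tl hd v v p) (hp : p ≠ []) : False :=
  hp (hacyc v p h)

/-- if `a ∈ p` where `p` is a walk, and a later/earlier occurrence would close a cycle -/
theorem Acyclic.not_mem_of_split (hacyc : Acyclic tl hd) {p q : List A} {a : A}
    (h : IsArcWalk tl hd u v (p ++ a :: q)) : a ∉ p ∧ a ∉ q := by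
  obtain ⟨w, h1, h2⟩ := isArcWalk_append.1 h
  obtain ⟨hw, h2'⟩ := isArcWalk_cons.1 h2
  constructor
  · intro hap
    obtain ⟨p₁, p₂, rfl, hp1, hp2⟩ := h1.split hap
    -- walk from hd a to tl a : p₂, then arc a back to hd a
    have : IsArcWalk tl hd (hd a) (hd a) (p₂ ++ [a]) :=
      isArcWalk_append.2 ⟨tl a, hw ▸ hp2, rfl, rfl⟩
    exact hacyc.no_closed this (by simp)
  · intro haq
    obtain ⟨q₁, q₂, rfl, hq1, hq2⟩ := h2'.split haq
    have : IsArcWalk tl hd (hd a) (hd a) (q₁ ++ [a]) :=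
      isArcWalk_append.2 ⟨tl a, hq1, rfl, rfl⟩
    exact hacyc.no_closed this (by simp)

theorem Acyclic.walk_nodup (hacyc : Acyclic tl hd) {p : List A}
    (h : IsArcWalk tl hd u v p) : p.Nodup := by
  induction p generalizing u with
  | nil => exact List.nodup_nil
  | cons a q ih =>
    obtain ⟨hw, h2⟩ := isArcWalk_cons.1 h
    refine List.nodup_cons.2 ⟨fun haq => ?_, ih h2⟩
    exact (hacyc.not_mem_of_split (p := []) (q := q) h).2 haq

/-- two distinct arcs with the same head cannot lie on a common walk (acyclic case) -/
theorem Acyclic.not_parallel_mem (hacyc : Acyclic tl hd) {p : List A} {b c : A}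
    (h : IsArcWalk tl hd u v p) (hb : b ∈ p) (hc : c ∈ p) (hbc : b ≠ c)
    (hh : hd b = hd c) : False := by
  obtain ⟨p₁, p₂, rfl, h1, h2⟩ := h.split hb
  rcases List.mem_append.1 hc with hcp | hcp
  · -- c before b : walk from hd c to tl b, then b returns to hd b = hd c
    obtain ⟨q₁, q₂, rfl, hq1, hq2⟩ := h1.split hcp
    have : IsArcWalk tl hd (hd c) (hd c) (q₂ ++ [b]) :=
      isArcWalk_append.2 ⟨tl b, hq2, rfl, hh ▸ rfl⟩
    exact hacyc.no_closed this (by simp)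
  · rcases List.mem_cons.1 hcp with rfl | hcp
    · exact hbc rfl
    · obtain ⟨q₁, q₂, rfl, hq1, hq2⟩ := h2.split hcp
      have : IsArcWalk tl hd (hd b) (hd b) (q₁ ++ [c]) :=
        isArcWalk_append.2 ⟨tl c, hq1, rfl, hh ▸ rfl⟩
      exact hacyc.no_closed this (by simp)

section Lam
variable [Finite A]

/-- the set whose sSup is `lam` -/
def lamSet (tl hd : A → V) (s t : V) : Set ℕ :=
  {k | ∃ P : Fin k → List A,
    (∀ i, IsArcWalk tl hd s t (P i)) ∧
    ∀ i j : Fin k, i ≠ j → ∀ a, a ∈ P i → a ∉ P j}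

theorem lam_eq_sSup : lam tl hd s t = sSup (lamSet tl hd s t) := rfl

theorem zero_mem_lamSet : 0 ∈ lamSet tl hd s t :=
  ⟨fun i => i.elim0, fun i => i.elim0, fun i => i.elim0⟩

theorem lamSet_bddAbove (hst : s ≠ t) : BddAbove (lamSet tl hd s t) := by
  refine ⟨Nat.card A, fun k hk => ?_⟩
  obtain ⟨P, hw, hd⟩ := hk
  have hne : ∀ i, P i ≠ [] := by
    intro i h
    exact hst (isArcWalk_nil.1 (h ▸ hw i))
  have hinj : Function.Injective (fun i : Fin k => (P i).head (hne i)) := by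
    intro i j hij
    simp only at hij
    by_contra hne'
    refine hd i j hne' ((P i).head (hne i)) (List.head_mem _) ?_
    rw [hij]; exact List.head_mem _
  simpa using Nat.card_le_card_of_injective _ hinj

theorem two_le_lam_iff (hst : s ≠ t) :
    2 ≤ lam tl hd s t ↔ ∃ p q, IsArcWalk tl hd s t p ∧ IsArcWalk tl hd s t q ∧
      ∀ a ∈ p, a ∉ q := by
  constructor
  · intro h
    have hmem := Nat.sSup_mem ⟨0, zero_mem_lamSet (tl := tl) (hd := hd) (s := s) (t := t)⟩
      (lamSet_bddAbove hst)
    have h2 : 2 ≤ sSup (lamSet tl hd s t) := h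
    obtain ⟨P, hw, hdisj⟩ := hmem
    refine ⟨P ⟨0, by omega⟩, P ⟨1, by omega⟩, hw _, hw _, fun a ha => ?_⟩
    exact hdisj _ _ (by simp [Fin.ext_iff]) a ha
  · rintro ⟨p, q, hp, hq, hdisj⟩
    refine le_csSup (lamSet_bddAbove hst) ?_
    refine ⟨![p, q], fun i => ?_, fun i j hij a ha => ?_⟩
    · fin_cases i <;> simpa
    · fin_cases i <;> fin_cases j <;> simp_all <;> exact fun h => hdisj a h ha

theorem one_le_lam_iff (hst : s ≠ t) :
    1 ≤ lam tl hd s t ↔ ∃ p, IsArcWalk tl hd s t p := by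
  constructor
  · intro h
    have hmem := Nat.sSup_mem ⟨0, zero_mem_lamSet (tl := tl) (hd := hd) (s := s) (t := t)⟩
      (lamSet_bddAbove hst)
    have h1 : 1 ≤ sSup (lamSet tl hd s t) := h
    obtain ⟨P, hw, -⟩ := hmem
    exact ⟨P ⟨0, h1⟩, hw _⟩
  · rintro ⟨p, hp⟩
    refine le_csSup (lamSet_bddAbove hst) ?_
    exact ⟨fun _ => p, fun _ => hp, fun i j hij => absurd (Subsingleton.elim i j) hij⟩

end Lam

section Subtype

variable {e : A}

/-- walks in the arc-deleted graph map to walks in the original graph -/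
theorem isArcWalk_map {p : List {b : A // b ≠ e}} (h : IsArcWalk (fun b => tl b.1) (fun b => hd b.1) u v p) :
    IsArcWalk tl hd u v (p.map (·.1)) := by
  induction p generalizing u with
  | nil => exact h
  | cons a q ih => exact ⟨h.1, ih h.2⟩

theorem isArcWalk_lift {q : List A} (h : IsArcWalk tl hd u v q) (he : ∀ x ∈ q, x ≠ e) :
    ∃ p : List {b : A // b ≠ e}, p.map (·.1) = q ∧
      IsArcWalk (fun b => tl b.1) (fun b => hd b.1) u v p := by
  induction q generalizing u with
  | nil => exact ⟨[], rfl, h⟩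
  | cons a q ih =>
    obtain ⟨p, hp, hw⟩ := ih h.2 (fun x hx => he x (List.mem_cons_of_mem _ hx))
    exact ⟨⟨a, he a (List.mem_cons_self)⟩ :: p, by simp [hp], h.1, hw⟩

theorem Acyclic.delete (hacyc : Acyclic tl hd) :
    Acyclic (fun b : {b : A // b ≠ e} => tl b.1) (fun b => hd b.1) := by
  intro v p h
  have h2 := hacyc v _ (isArcWalk_map h)
  cases p with
  | nil => rfl
  | cons a q => simp at h2

/-- two disjoint walks avoiding `e` give flow ≥ 2 in the deleted network -/
theorem two_le_lam_delete [Finite A] (hst : s ≠ t) {p q : List A}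
    (hp : IsArcWalk tl hd s t p) (hq : IsArcWalk tl hd s t q)
    (hdisj : ∀ a ∈ p, a ∉ q) (hpe : ∀ x ∈ p, x ≠ e) (hqe : ∀ x ∈ q, x ≠ e) :
    2 ≤ lam (fun b : {b : A // b ≠ e} => tl b.1) (fun b => hd b.1) s t := by
  obtain ⟨p', hp', hwp⟩ := isArcWalk_lift hp hpe
  obtain ⟨q', hq', hwq⟩ := isArcWalk_lift hq hqe
  refine (two_le_lam_iff hst).2 ⟨p', q', hwp, hwq, fun a ha ha' => ?_⟩
  have h1 : a.1 ∈ p := hp' ▸ List.mem_map_of_mem ha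
  have h2 : a.1 ∈ q := hq' ▸ List.mem_map_of_mem ha'
  exact hdisj a.1 h1 h2

end Subtype

section Minimal
variable [Finite A] {T : Set V}

theorem lam_delete_lt_two {e : A} (hst : s ≠ t)
    (h : lam (fun b : {b : A // b ≠ e} => tl b.1) (fun b => hd b.1) s t < 2)
    {p q : List A} (hp : IsArcWalk tl hd s t p) (hq : IsArcWalk tl hd s t q)
    (hdisj : ∀ a ∈ p, a ∉ q) : e ∈ p ∨ e ∈ q := by
  by_contra hc
  push_neg at hc
  refine absurd (two_le_lam_delete hst hp hq hdisj ?_ ?_) (not_le.2 h)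
  · intro x hx hxe; subst hxe; exact hc.1 hx
  · intro x hx hxe; subst hxe; exact hc.2 hx

theorem ne_source_of_mem (ht : t ∈ T) (hsT : s ∉ T) : t ≠ s := fun h => hsT (h ▸ ht)

/-- in a 2-minimal acyclic network no arc enters the source -/
theorem no_into_source (hacyc : Acyclic tl hd) (hmin : TwoMinimal tl hd s T)
    (hsT : s ∉ T) : ∀ a : A, hd a ≠ s := by
  intro e he
  obtain ⟨t, ht, hlt⟩ := hmin.2 e
  have hst : s ≠ t := (ne_source_of_mem ht hsT).symm
  obtain ⟨p, q, hp, hq, hdisj⟩ := (two_le_lam_iff hst).1 (hmin.1 t ht)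
  have key : ∀ r : List A, IsArcWalk tl hd s t r → e ∉ r := by
    intro r hr her
    obtain ⟨p₁, p₂, rfl, h1, h2⟩ := hr.split her
    refine hacyc.no_closed (v := s) (p := p₁ ++ [e])
      (isArcWalk_append.2 ⟨tl e, h1, rfl, ?_⟩) (by simp)
    exact he
  rcases lam_delete_lt_two hst hlt hp hq hdisj with h | h
  · exact key p hp h
  · exact key q hq h

/-- every arc lies on a pair of disjoint walks to some receiver -/
theorem arc_on_flow (hmin : TwoMinimal tl hd s T) (hsT : s ∉ T) (e : A) :
    ∃ t ∈ T, ∃ p q : List A, IsArcWalk tl hd s t p ∧ IsArcWalk tl hd s t q ∧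
      (∀ a ∈ p, a ∉ q) ∧ (e ∈ p ∨ e ∈ q) := by
  obtain ⟨t, ht, hlt⟩ := hmin.2 e
  have hst : s ≠ t := (ne_source_of_mem ht hsT).symm
  obtain ⟨p, q, hp, hq, hdisj⟩ := (two_le_lam_iff hst).1 (hmin.1 t ht)
  exact ⟨t, ht, p, q, hp, hq, hdisj, lam_delete_lt_two hst hlt hp hq hdisj⟩

/-- every arc with non-source tail has an arc entering its tail -/
theorem exists_in_arc (hmin : TwoMinimal tl hd s T) (hsT : s ∉ T)
    {e : A} (he : tl e ≠ s) : ∃ b, hd b = tl e := by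
  obtain ⟨t, ht, p, q, hp, hq, hdisj, hmem⟩ := arc_on_flow hmin hsT e
  have : ∃ r, IsArcWalk tl hd s t r ∧ e ∈ r := by
    rcases hmem with h | h
    exacts [⟨p, hp, h⟩, ⟨q, hq, h⟩]
  obtain ⟨r, hr, her⟩ := this
  obtain ⟨p₁, p₂, rfl, h1, h2⟩ := hr.split her
  have hp₁ : p₁ ≠ [] := by
    intro h
    exact he (isArcWalk_nil.1 (h ▸ h1)).symm
  obtain ⟨b, hb, hbv⟩ := h1.exists_last hp₁
  exact ⟨b, hbv⟩

end Minimal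

section Subtree
variable [Finite A] {T : Set V}

/-- reachability along the subtree relation -/
abbrev Reaches (tl hd : A → V) : A → A → Prop := Relation.ReflTransGen (SubtreeRel tl hd)

theorem SubtreeRel.pred_unique {x y z : A} (hx : SubtreeRel tl hd x z)
    (hy : SubtreeRel tl hd y z) : x = y := by
  obtain ⟨hx1, hx2⟩ := hx
  obtain ⟨hy1, hy2⟩ := hy
  have : inDeg hd (tl z) = 1 := hx1 ▸ hx2
  obtain ⟨w, hw⟩ := Set.ncard_eq_one.1 this
  have h1 : x ∈ {a | hd a = tl z} := hx1
  have h2 : y ∈ {a | hd a = tl z} := hy1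
  rw [hw] at h1 h2
  rw [Set.mem_singleton_iff.1 h1, Set.mem_singleton_iff.1 h2]

theorem reaches_total {r₁ b : A} (h1 : Reaches tl hd r₁ b) :
    ∀ r₂' , Reaches tl hd r₂' b → Reaches tl hd r₁ r₂' ∨ Reaches tl hd r₂' r₁ := by
  induction h1 with
  | refl => intro r₂' h2; exact Or.inr h2
  | @tail c b h1' hcb ih =>
    intro r₂' h2
    rcases Relation.ReflTransGen.cases_tail h2 with rfl | ⟨c', h2', hc'b⟩
    · exact Or.inl (Relation.ReflTransGen.tail h1' hcb)
    · rw [hc'b.pred_unique hcb] at h2'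
      exact ih r₂' h2'

theorem common_root {b c : A} (h : Relation.EqvGen (SubtreeRel tl hd) b c) :
    ∃ r, Reaches tl hd r b ∧ Reaches tl hd r c := by
  induction h with
  | rel x y hxy => exact ⟨x, Relation.ReflTransGen.refl, Relation.ReflTransGen.single hxy⟩
  | refl x => exact ⟨x, Relation.ReflTransGen.refl, Relation.ReflTransGen.refl⟩
  | symm x y _ ih => obtain ⟨r, h1, h2⟩ := ih; exact ⟨r, h2, h1⟩
  | trans x y z _ _ ih1 ih2 =>
    obtain ⟨r₁, hx, hy⟩ := ih1
    obtain ⟨r₂, hy', hz⟩ := ih2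
    rcases reaches_total hy r₂ hy' with h | h
    · exact ⟨r₁, hx, h.trans hz⟩
    · exact ⟨r₂, h.trans hx, hz⟩

/-- the chain of arcs from the root to an arc of a subtree -/
theorem chain_of_reaches {r b : A} (h : Reaches tl hd r b) :
    ∃ l : List A, IsArcWalk tl hd (tl r) (tl b) l ∧
      ∀ x ∈ l, Reaches tl hd r x ∧ inDeg hd (hd x) = 1 := by
  induction h with
  | refl => exact ⟨[], rfl, by simp⟩
  | @tail c b h1 hcb ih =>
    obtain ⟨l, hw, hl⟩ := ih
    refine ⟨l ++ [c], isArcWalk_append.2 ⟨tl c, hw, rfl, hcb.1⟩, fun x hx => ?_⟩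
    rcases List.mem_append.1 hx with hx | hx
    · exact hl x hx
    · rw [List.mem_singleton.1 hx]
      exact ⟨h1, hcb.2⟩

/-- the root of a subtree lies on every walk from the source through an arc of the subtree -/
theorem root_mem_walk (hs : ∀ x : A, hd x ≠ s)
    {r b : A} (hr : Reaches tl hd r b) :
    ∀ {v : V} {W : List A}, IsArcWalk tl hd s v W → b ∈ W → r ∈ W := by
  induction hr with
  | refl => exact fun _ hb => hb
  | @tail c b h1 hcb ih =>
    intro v W hW hbW
    have hcW : c ∈ W := by
      obtain ⟨p₁, p₂, rfl, hp1, hp2⟩ := hW.split hbW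
      have hne : p₁ ≠ [] := by
        intro h
        exact hs c (hcb.1.trans (isArcWalk_nil.1 (h ▸ hp1)).symm)
      obtain ⟨e, he, hev⟩ := hp1.exists_last hne
      have : e = c := by
        refine SubtreeRel.pred_unique (z := b) ⟨hev, ?_⟩ hcb
        rw [hev, ← hcb.1]
        exact hcb.2
      subst this
      exact List.mem_append.2 (Or.inl he)
    exact ih hW hcW

end Subtree

section L2
variable [Finite A] {T : Set V}

theorem reroute (hacyc : Acyclic tl hd) (hs : ∀ x : A, hd x ≠ s) {b c : A}
    (hbc : b ≠ c) (hh : hd b = hd c) {r : A}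
    (hrb : Reaches tl hd r b) (hrc : Reaches tl hd r c)
    (hdeg : 2 ≤ inDeg hd (hd c))
    {p q : List A} (hp : IsArcWalk tl hd s t p) (hq : IsArcWalk tl hd s t q)
    (hdisj : ∀ a ∈ p, a ∉ q) (hcp : c ∈ p) :
    ∃ p', IsArcWalk tl hd s t p' ∧ (∀ a ∈ p', a ∉ q) ∧ c ∉ p' := by
  have hbp : b ∉ p := fun hbp => hacyc.not_parallel_mem hp hbp hcp hbc hh
  have hrp : r ∈ p := root_mem_walk hs hrc hp hcp
  have hbq : b ∉ q := by
    intro hbq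
    exact hdisj r hrp (root_mem_walk hs hrb hq hbq)
  obtain ⟨p₁, p₂, rfl, hp1, hp2⟩ := hp.split hcp
  obtain ⟨hcp1, hcp2⟩ := hacyc.not_mem_of_split hp
  have hrc' : r ≠ c := by
    rintro rfl
    rcases (Relation.ReflTransGen.cases_head hrb) with rfl | ⟨x, hstep, -⟩
    · exact hbc rfl
    · have := hstep.2
      omega
  have hrp1 : r ∈ p₁ := by
    have hw : IsArcWalk tl hd s (hd c) (p₁ ++ [c]) :=
      isArcWalk_append.2 ⟨tl c, hp1, rfl, rfl⟩
    have := root_mem_walk hs hrc hw (by simp)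
    rcases List.mem_append.1 this with h | h
    · exact h
    · exact absurd (List.mem_singleton.1 h) hrc'
  obtain ⟨p₀, p₃, rfl, hp0, -⟩ := hp1.split hrp1
  obtain ⟨l, hlw, hl⟩ := chain_of_reaches hrb
  refine ⟨p₀ ++ (l ++ b :: p₂), ?_, ?_, ?_⟩
  · refine isArcWalk_append.2 ⟨tl r, hp0, isArcWalk_append.2 ⟨tl b, hlw, rfl, ?_⟩⟩
    rw [hh]; exact hp2
  · intro a ha
    rcases List.mem_append.1 ha with h | h
    · refine hdisj a ?_
      simp [h]
    · rcases List.mem_append.1 h with h | h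
      · intro haq
        exact hdisj r (by simp [hrp1]) (root_mem_walk hs (hl a h).1 hq haq)
      · rcases List.mem_cons.1 h with rfl | h
        · exact hbq
        · refine hdisj a ?_
          simp [h]
  · intro hc'
    rcases List.mem_append.1 hc' with h | h
    · exact hcp1 (by simp [h])
    · rcases List.mem_append.1 h with h | h
      · have := (hl c h).2
        omega
      · rcases List.mem_cons.1 h with rfl | h
        · exact hbc rfl
        · exact hcp2 h

/-- **Lemma (key structural fact)**: two distinct arcs with a common head lie in
distinct subtrees. -/
theorem subtree_ne (hacyc : Acyclic tl hd) (hmin : TwoMinimal tl hd s T) (hsT : s ∉ T)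
    {b c : A} (hbc : b ≠ c) (hh : hd b = hd c) :
    Quot.mk (SubtreeRel tl hd) b ≠ Quot.mk (SubtreeRel tl hd) c := by
  intro hquot
  obtain ⟨r, hrb, hrc⟩ := common_root (Quot.eq.1 hquot)
  have hs := no_into_source hacyc hmin hsT
  have hdeg : 2 ≤ inDeg hd (hd c) := by
    have hsub : {b, c} ⊆ {a | hd a = hd c} := by
      rintro x (rfl | rfl)
      · exact hh
      · rfl
    calc 2 = ({b, c} : Set A).ncard := (Set.ncard_pair hbc).symm
    _ ≤ inDeg hd (hd c) := Set.ncard_le_ncard hsub (Set.toFinite _)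
  obtain ⟨t, ht, hlt⟩ := hmin.2 c
  have hst : s ≠ t := (ne_source_of_mem ht hsT).symm
  obtain ⟨p, q, hp, hq, hdisj⟩ := (two_le_lam_iff hst).1 (hmin.1 t ht)
  have hdisj' : ∀ a ∈ q, a ∉ p := fun a haq hap => hdisj a hap haq
  have key : ∃ p' q', IsArcWalk tl hd s t p' ∧ IsArcWalk tl hd s t q' ∧
      (∀ a ∈ p', a ∉ q') ∧ c ∉ p' ∧ c ∉ q' := by
    by_cases hcp : c ∈ p
    · have hcq : c ∉ q := hdisj c hcp
      obtain ⟨p', hw, hd', hc'⟩ := reroute hacyc hs hbc hh hrb hrc hdeg hp hq hdisj hcp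
      exact ⟨p', q, hw, hq, hd', hc', hcq⟩
    · by_cases hcq : c ∈ q
      · obtain ⟨q', hw, hd', hc'⟩ := reroute hacyc hs hbc hh hrb hrc hdeg hq hp hdisj' hcq
        exact ⟨q', p, hw, hp, hd', hc', hcp⟩
      · exact ⟨p, q, hp, hq, hdisj, hcp, hcq⟩
  obtain ⟨p', q', hw1, hw2, hd', hc1, hc2⟩ := key
  refine absurd (two_le_lam_delete hst hw1 hw2 hd' ?_ ?_) (not_le.2 hlt)
  · intro x hx hxe; subst hxe; exact hc1 hx
  · intro x hx hxe; subst hxe; exact hc2 hx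

end L2

open scoped Classical

section Counting

/-- number of arcs in `X` whose `f`-endpoint is `w` -/
noncomputable def inC (f : A → V) (X : Set A) (w : V) : ℕ := {a ∈ X | f a = w}.ncard

theorem inC_insert [Finite A] (f : A → V) {X : Set A} {a : A} (ha : a ∉ X) (w : V) :
    inC f (insert a X) w = inC f X w + if f a = w then 1 else 0 := by
  unfold inC
  split_ifs with h
  · have : {x ∈ insert a X | f x = w} = insert a {x ∈ X | f x = w} := by
      ext x
      simp only [Set.mem_setOf_eq, Set.mem_insert_iff]
      constructor
      · rintro ⟨rfl | hx, hfx⟩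
        · exact Or.inl rfl
        · exact Or.inr ⟨hx, hfx⟩
      · rintro (rfl | ⟨hx, hfx⟩)
        · exact ⟨Or.inl rfl, h⟩
        · exact ⟨Or.inr hx, hfx⟩
    rw [this, Set.ncard_insert_of_notMem (fun hx => ha hx.1) (Set.toFinite _)]
  · have : {x ∈ insert a X | f x = w} = {x ∈ X | f x = w} := by
      ext x
      simp only [Set.mem_setOf_eq, Set.mem_insert_iff]
      constructor
      · rintro ⟨rfl | hx, hfx⟩
        · exact absurd hfx h
        · exact ⟨hx, hfx⟩
      · rintro ⟨hx, hfx⟩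
        exact ⟨Or.inr hx, hfx⟩
    rw [this]
    omega

theorem inC_diff [Finite A] (f : A → V) {X Y : Set A} (h : Y ⊆ X) (w : V) :
    (inC f (X \ Y) w : ℤ) = inC f X w - inC f Y w := by
  unfold inC
  have h1 : {a ∈ X \ Y | f a = w} = {a ∈ X | f a = w} \ {a ∈ Y | f a = w} := by
    ext x
    simp only [Set.mem_setOf_eq, Set.mem_diff]
    tauto
  have h2 : {a ∈ Y | f a = w} ⊆ {a ∈ X | f a = w} := fun x hx => ⟨h hx.1, hx.2⟩
  rw [h1, Set.ncard_diff h2 (Set.toFinite _)]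
  have := Set.ncard_le_ncard h2 (Set.toFinite _)
  omega

theorem inC_union [Finite A] (f : A → V) {X Y : Set A} (h : Disjoint X Y) (w : V) :
    inC f (X ∪ Y) w = inC f X w + inC f Y w := by
  unfold inC
  have h1 : {a ∈ X ∪ Y | f a = w} = {a ∈ X | f a = w} ∪ {a ∈ Y | f a = w} := by
    ext x
    simp only [Set.mem_setOf_eq, Set.mem_union]
    tauto
  rw [h1, Set.ncard_union_eq (h.mono (fun x hx => hx.1) (fun x hx => hx.1))
    (Set.toFinite _) (Set.toFinite _)]

theorem inC_pos_iff [Finite A] (f : A → V) {X : Set A} {w : V} :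
    0 < inC f X w ↔ ∃ a ∈ X, f a = w := by
  unfold inC
  rw [Set.ncard_pos (Set.toFinite _)]
  constructor
  · rintro ⟨a, ha, hfa⟩; exact ⟨a, ha, hfa⟩
  · rintro ⟨a, ha, hfa⟩; exact ⟨a, ha, hfa⟩

theorem inC_eq_zero [Finite A] (f : A → V) {X : Set A} {w : V}
    (h : ∀ a ∈ X, f a ≠ w) : inC f X w = 0 := by
  unfold inC
  rw [Set.ncard_eq_zero (Set.toFinite _)]
  ext x
  simp only [Set.mem_setOf_eq, Set.mem_empty_iff_false, iff_false, not_and]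
  exact h x

/-- flow identity for a duplicate-free walk -/
theorem walkflow [Finite A] {tl hd : A → V} {u v : V} {p : List A}
    (h : IsArcWalk tl hd u v p) (hnd : p.Nodup) (w : V) :
    (inC hd {a | a ∈ p} w : ℤ) - inC tl {a | a ∈ p} w
      = (if w = v then 1 else 0) - (if w = u then 1 else 0) := by
  induction p generalizing u with
  | nil =>
    have : u = v := isArcWalk_nil.1 h
    subst this
    have he : ({a | a ∈ ([] : List A)} : Set A) = ∅ := by ext x; simp
    simp [inC, he]
  | cons a p ih =>
    obtain ⟨hta, h2⟩ := isArcWalk_cons.1 h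
    have hnd2 := List.nodup_cons.1 hnd
    have hset : {x | x ∈ a :: p} = insert a {x | x ∈ p} := by ext x; simp
    have hnotmem : a ∉ {x | x ∈ p} := hnd2.1
    have ih' := ih h2 hnd2.2
    rw [hset, inC_insert hd hnotmem, inC_insert tl hnotmem]
    push_cast
    rw [← hta]
    have h1 : (if hd a = w then (1:ℤ) else 0) = if w = hd a then 1 else 0 := by
      rcases eq_or_ne (hd a) w with u1 | u1
      · rw [if_pos u1, if_pos u1.symm]
      · rw [if_neg u1, if_neg (fun h => u1 h.symm)]
    have h2' : (if tl a = w then (1:ℤ) else 0) = if w = tl a then 1 else 0 := by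
      rcases eq_or_ne (tl a) w with u1 | u1
      · rw [if_pos u1, if_pos u1.symm]
      · rw [if_neg u1, if_neg (fun h => u1 h.symm)]
    rw [h1, h2']
    split_ifs at ih' ⊢ <;> omega

end Counting

section Shrink

theorem exists_nodup_subwalk {tl hd : A → V} {u v : V} :
    ∀ (n : ℕ) (p : List A), p.length ≤ n → IsArcWalk tl hd u v p →
      ∃ p', IsArcWalk tl hd u v p' ∧ p'.Nodup ∧ ∀ x ∈ p', x ∈ p := by
  intro n
  induction n with
  | zero =>
    intro p hlen h
    have : p = [] := List.length_eq_zero_iff.1 (Nat.le_zero.1 hlen)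
    subst this
    exact ⟨[], h, List.nodup_nil, by simp⟩
  | succ n ih =>
    intro p hlen h
    by_cases hnd : p.Nodup
    · exact ⟨p, h, hnd, fun x hx => hx⟩
    · haveI := Classical.decEq A
      obtain ⟨x, hdup⟩ := List.exists_duplicate_iff_not_nodup.2 hnd
      have hcount : 2 ≤ p.count x := List.duplicate_iff_two_le_count.1 hdup
      obtain ⟨p₁, p₂, rfl, h1, h2⟩ := h.split hdup.mem
      have hmem : x ∈ p₁ ∨ x ∈ p₂ := by
        by_contra hc
        push_neg at hc
        have c1 : p₁.count x = 0 := List.count_eq_zero.2 hc.1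
        have c2 : p₂.count x = 0 := List.count_eq_zero.2 hc.2
        rw [List.count_append, List.count_cons] at hcount
        simp [c1, c2] at hcount
      rcases hmem with hm | hm
      · obtain ⟨q₁, q₂, rfl, hq1, hq2⟩ := h1.split hm
        have hwalk : IsArcWalk tl hd u v (q₁ ++ x :: p₂) :=
          isArcWalk_append.2 ⟨tl x, hq1, rfl, h2⟩
        have hlen' : (q₁ ++ x :: p₂).length ≤ n := by
          simp only [List.length_append, List.length_cons] at hlen ⊢
          omega
        obtain ⟨p', hw', hnd', hsub'⟩ := ih _ hlen' hwalk
        refine ⟨p', hw', hnd', fun y hy => ?_⟩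
        have := hsub' y hy
        simp only [List.mem_append, List.mem_cons] at this ⊢
        tauto
      · obtain ⟨q₁, q₂, rfl, hq1, hq2⟩ := h2.split hm
        have hwalk : IsArcWalk tl hd u v (p₁ ++ x :: q₂) :=
          isArcWalk_append.2 ⟨tl x, h1, rfl, hq2⟩
        have hlen' : (p₁ ++ x :: q₂).length ≤ n := by
          simp only [List.length_append, List.length_cons] at hlen ⊢
          omega
        obtain ⟨p', hw', hnd', hsub'⟩ := ih _ hlen' hwalk
        refine ⟨p', hw', hnd', fun y hy => ?_⟩
        have := hsub' y hy
        simp only [List.mem_append, List.mem_cons] at this ⊢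
        tauto

end Shrink

section Extract
variable [Finite A] [Finite V]

theorem transGen_walk {x y : V}
    (h : Relation.TransGen (fun y x : V => ∃ a : A, tl a = x ∧ hd a = y) y x) :
    ∃ p : List A, p ≠ [] ∧ IsArcWalk tl hd x y p := by
  induction h with
  | single h =>
    obtain ⟨a, ha1, ha2⟩ := h
    exact ⟨[a], by simp, ha1, ha2⟩
  | tail _ h ih =>
    obtain ⟨a, ha1, ha2⟩ := h
    obtain ⟨p, hne, hw⟩ := ih
    exact ⟨a :: p, by simp, ha1, ha2 ▸ hw⟩

theorem succ_wf (hacyc : Acyclic tl hd) :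
    WellFounded (fun y x : V => ∃ a : A, tl a = x ∧ hd a = y) := by
  set r := fun y x : V => ∃ a : A, tl a = x ∧ hd a = y with hr
  have hirr : ∀ v, ¬ Relation.TransGen r v v := by
    intro v hv
    obtain ⟨p, hne, hw⟩ := transGen_walk hv
    exact hne (hacyc v p hw)
  haveI : IsIrrefl V (Relation.TransGen r) := ⟨hirr⟩
  exact Subrelation.wf (fun h => Relation.TransGen.single h)
    (Finite.wellFounded_of_trans_of_irrefl _)

theorem extract_walk (hacyc : Acyclic tl hd) {S : Set A} {s t : V}
    (hcons : ∀ v, v ≠ s → v ≠ t → inC hd S v = inC tl S v)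
    (hs : ∀ a ∈ S, hd a ≠ s)
    (hout : ∃ a ∈ S, tl a = s) :
    ∃ W, IsArcWalk tl hd s t W ∧ ∀ x ∈ W, x ∈ S := by
  suffices h : ∀ v : V, (∃ a ∈ S, tl a = v) → ∃ W, IsArcWalk tl hd v t W ∧ ∀ x ∈ W, x ∈ S by
    exact h s hout
  intro v
  induction v using (succ_wf hacyc).induction with
  | _ v ih =>
    rintro ⟨a, haS, hav⟩
    by_cases hat : hd a = t
    · exact ⟨[a], ⟨hav, hat⟩, by simp [haS]⟩
    · have has : hd a ≠ s := hs a haS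
      have hpos : 0 < inC hd S (hd a) := inC_pos_iff hd |>.2 ⟨a, haS, rfl⟩
      rw [hcons _ has hat] at hpos
      obtain ⟨b, hbS, hb⟩ := (inC_pos_iff tl).1 hpos
      obtain ⟨W, hW, hWS⟩ := ih (hd a) ⟨a, hav, rfl⟩ ⟨b, hbS, hb⟩
      refine ⟨a :: W, ⟨hav, hW⟩, fun x hx => ?_⟩
      rcases List.mem_cons.1 hx with rfl | hx
      · exact haS
      · exact hWS x hx

end Extract

section Menger
variable [Finite A] [Finite V]

theorem resList {PS : Set A} {x y : V}
    (h : Relation.ReflTransGen (fun x y =>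
      (∃ a, a ∉ PS ∧ tl a = x ∧ hd a = y) ∨ (∃ a, a ∈ PS ∧ hd a = x ∧ tl a = y)) x y) :
    ∃ RL : List (A ⊕ A), IsArcWalk (Sum.elim tl hd) (Sum.elim hd tl) x y RL ∧
      (∀ a : A, Sum.inl a ∈ RL → a ∉ PS) ∧ (∀ a : A, Sum.inr a ∈ RL → a ∈ PS) := by
  induction h with
  | refl => exact ⟨[], rfl, by simp, by simp⟩
  | tail h1 hstep ih =>
    obtain ⟨RL, hw, hl, hr⟩ := ih
    rcases hstep with ⟨a, hna, ha1, ha2⟩ | ⟨a, hma, ha1, ha2⟩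
    · refine ⟨RL ++ [Sum.inl a], isArcWalk_append.2 ⟨_, hw, ha1, ha2⟩, ?_, ?_⟩
      · intro a' ha'
        rcases List.mem_append.1 ha' with h' | h'
        · exact hl a' h'
        · rw [Sum.inl_injective (List.mem_singleton.1 h')]; exact hna
      · intro a' ha'
        rcases List.mem_append.1 ha' with h' | h'
        · exact hr a' h'
        · exact absurd (List.mem_singleton.1 h') (by simp)
    · refine ⟨RL ++ [Sum.inr a], isArcWalk_append.2 ⟨_, hw, ha1, ha2⟩, ?_, ?_⟩
      · intro a' ha'
        rcases List.mem_append.1 ha' with h' | h'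
        · exact hl a' h'
        · exact absurd (List.mem_singleton.1 h') (by simp)
      · intro a' ha'
        rcases List.mem_append.1 ha' with h' | h'
        · exact hr a' h'
        · rw [Sum.inr_injective (List.mem_singleton.1 h')]; exact hma

theorem inC_sum_elim (f g : A → V) (R : List (A ⊕ A)) (w : V) :
    inC (Sum.elim f g) {z | z ∈ R} w
      = inC f {a | Sum.inl a ∈ R} w + inC g {a | Sum.inr a ∈ R} w := by
  unfold inC
  have hset : {z ∈ {z | z ∈ R} | Sum.elim f g z = w}
      = Sum.inl '' {a ∈ {a | Sum.inl a ∈ R} | f a = w}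
        ∪ Sum.inr '' {a ∈ {a | Sum.inr a ∈ R} | g a = w} := by
    ext z
    cases z with
    | inl a => simp
    | inr a => simp
  rw [hset, Set.ncard_union_eq ?_ (Set.toFinite _) (Set.toFinite _),
    Set.ncard_image_of_injective _ Sum.inl_injective,
    Set.ncard_image_of_injective _ Sum.inr_injective]
  rw [Set.disjoint_left]
  rintro z ⟨a, -, rfl⟩ ⟨b, -, hb⟩
  exact Sum.inl_ne_inr hb.symm

theorem cut_of_lam_lt_two (hacyc : Acyclic tl hd)
    (hs : ∀ a : A, hd a ≠ s) (hts : t ≠ s) (hlam : lam tl hd s t < 2) :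
    ∃ U : Set V, t ∈ U ∧ s ∉ U ∧ cutVal tl hd U ≤ 1 := by
  have hst : s ≠ t := hts.symm
  by_cases hreach : ∃ p, IsArcWalk tl hd s t p
  swap
  · refine ⟨{v | ¬∃ p, IsArcWalk tl hd s v p}, hreach, fun h' => h' ⟨[], rfl⟩, ?_⟩
    have : {a | tl a ∉ {v | ¬∃ p, IsArcWalk tl hd s v p}
        ∧ hd a ∈ {v | ¬∃ p, IsArcWalk tl hd s v p}} = ∅ := by
      ext a
      simp only [Set.mem_setOf_eq, not_not, Set.mem_empty_iff_false, iff_false, not_and]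
      rintro ⟨p, hp⟩
      exact ⟨p ++ [a], isArcWalk_append.2 ⟨tl a, hp, rfl, rfl⟩⟩
    unfold cutVal
    rw [this]
    simp
  obtain ⟨P, hP⟩ := hreach
  have hPnd : P.Nodup := hacyc.walk_nodup hP
  set PS : Set A := {a | a ∈ P} with hPS
  set Res : V → V → Prop := fun x y =>
    (∃ a, a ∉ PS ∧ tl a = x ∧ hd a = y) ∨ (∃ a, a ∈ PS ∧ hd a = x ∧ tl a = y) with hRes
  by_cases hU : Relation.ReflTransGen Res s t
  · exfalso
    obtain ⟨RL, hRLw, hRLl, hRLr⟩ := resList hU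
    obtain ⟨R, hRw, hRnd, hRsub⟩ := exists_nodup_subwalk RL.length RL le_rfl hRLw
    set FS : Set A := {a | Sum.inl a ∈ R} with hFS
    set BS : Set A := {a | Sum.inr a ∈ R} with hBS
    have hFP : ∀ a ∈ FS, a ∉ PS := fun a ha => hRLl a (hRsub _ ha)
    have hBP : BS ⊆ PS := fun a ha => hRLr a (hRsub _ ha)
    set S : Set A := (PS \ BS) ∪ FS with hS
    have hdisjS : Disjoint (PS \ BS) FS :=
      Set.disjoint_left.2 fun a ha hf => hFP a hf ha.1
    have hSid : ∀ (f : A → V) (w : V),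
        (inC f S w : ℤ) = inC f PS w - inC f BS w + inC f FS w := by
      intro f w
      rw [hS, inC_union f hdisjS]
      push_cast
      rw [inC_diff f hBP]
    have hPflow := fun w => walkflow hP hPnd w
    have hRflow := fun w => walkflow hRw hRnd w
    have hsplit1 : ∀ w, inC (Sum.elim hd tl) {z | z ∈ R} w
        = inC hd FS w + inC tl BS w := fun w => inC_sum_elim hd tl R w
    have hsplit2 : ∀ w, inC (Sum.elim tl hd) {z | z ∈ R} w
        = inC tl FS w + inC hd BS w := fun w => inC_sum_elim tl hd R w
    -- conservation of S at interior nodes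
    have hcons : ∀ w, w ≠ s → w ≠ t → inC hd S w = inC tl S w := by
      intro w hws hwt
      have e1 := hSid hd w
      have e2 := hSid tl w
      have p1 := hPflow w
      rw [if_neg hwt, if_neg hws, ← hPS] at p1
      have r1 := hRflow w
      rw [if_neg hwt, if_neg hws, hsplit2 w, hsplit1 w] at r1
      omega
    have hsS : ∀ a ∈ S, hd a ≠ s := fun a _ => hs a
    -- out-degree 2 at the source
    have hPs := hPflow s
    rw [if_neg hst, if_pos rfl, ← hPS] at hPs
    have hRs := hRflow s
    rw [if_neg hst, if_pos rfl, hsplit2 s, hsplit1 s] at hRs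
    have hz1 : inC hd PS s = 0 := inC_eq_zero hd (fun a _ => hs a)
    have hz2 : inC hd FS s = 0 := inC_eq_zero hd (fun a _ => hs a)
    have hz3 : inC hd BS s = 0 := inC_eq_zero hd (fun a _ => hs a)
    have houtS : (inC tl S s : ℤ) = 2 := by
      have := hSid tl s
      omega
    have hout : ∃ a ∈ S, tl a = s := by
      refine (inC_pos_iff tl).1 ?_
      omega
    obtain ⟨W1, hW1, hW1S⟩ := extract_walk hacyc hcons hsS hout
    have hW1nd : W1.Nodup := hacyc.walk_nodup hW1
    set W1S : Set A := {x | x ∈ W1} with hW1Sdef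
    have hW1sub : W1S ⊆ S := fun x hx => hW1S x hx
    set S₂ : Set A := S \ W1S with hS₂
    have hS₂id : ∀ (f : A → V) (w : V),
        (inC f S₂ w : ℤ) = inC f S w - inC f W1S w := fun f w => inC_diff f hW1sub w
    have hW1flow := fun w => walkflow hW1 hW1nd w
    have hcons₂ : ∀ w, w ≠ s → w ≠ t → inC hd S₂ w = inC tl S₂ w := by
      intro w hws hwt
      have e1 := hS₂id hd w
      have e2 := hS₂id tl w
      have p1 := hW1flow w
      rw [if_neg hwt, if_neg hws, ← hW1Sdef] at p1
      have := hcons w hws hwt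
      omega
    have hsS₂ : ∀ a ∈ S₂, hd a ≠ s := fun a _ => hs a
    have hout₂ : ∃ a ∈ S₂, tl a = s := by
      refine (inC_pos_iff tl).1 ?_
      have e2 := hS₂id tl s
      have p1 := hW1flow s
      rw [if_neg hst, if_pos rfl, ← hW1Sdef] at p1
      have hz4 : inC hd W1S s = 0 := inC_eq_zero hd (fun a _ => hs a)
      omega
    obtain ⟨W2, hW2, hW2S⟩ := extract_walk hacyc hcons₂ hsS₂ hout₂
    have hdisjW : ∀ a ∈ W1, a ∉ W2 := by
      intro a ha haW2
      exact (hW2S a haW2).2 ha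
    exact absurd ((two_le_lam_iff hst).2 ⟨W1, W2, hW1, hW2, hdisjW⟩) (not_le.2 hlam)
  · -- the set of residually-unreachable nodes is a small cut
    refine ⟨{v | ¬ Relation.ReflTransGen Res s v}, hU, fun h' => h' Relation.ReflTransGen.refl, ?_⟩
    set U : Set V := {v | ¬ Relation.ReflTransGen Res s v} with hUdef
    have hcross : ∀ a : A, tl a ∉ U → hd a ∈ U → a ∈ PS := by
      intro a h1 h2
      by_contra hna
      exact h2 ((not_not.1 h1).tail (Or.inl ⟨a, hna, rfl, rfl⟩))
    have hprop : ∀ (W : List A) (x y : V), IsArcWalk tl hd x y W →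
        (∀ c ∈ W, c ∈ PS) → x ∈ U → y ∈ U := by
      intro W
      induction W with
      | nil => intro x y hxy _ hx; exact (isArcWalk_nil.1 hxy) ▸ hx
      | cons c W ih =>
        intro x y hxy hsub hx
        obtain ⟨htc, h2⟩ := isArcWalk_cons.1 hxy
        have hhd : hd c ∈ U := by
          intro hr
          exact (htc ▸ hx) (hr.tail (Or.inr ⟨c, hsub c (by simp), rfl, rfl⟩))
        exact ih (hd c) y h2 (fun d hd' => hsub d (by simp [hd'])) hhd
    have huniq : ∀ a ∈ {a : A | tl a ∉ U ∧ hd a ∈ U}, ∀ b ∈ {a : A | tl a ∉ U ∧ hd a ∈ U},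
        a = b := by
      rintro a ⟨ha1, ha2⟩ b ⟨hb1, hb2⟩
      have haP : a ∈ P := hcross a ha1 ha2
      have hbP : b ∈ P := hcross b hb1 hb2
      obtain ⟨p₁, p₂, hPe, hp1, hp2⟩ := hP.split haP
      rw [hPe] at hbP
      rcases List.mem_append.1 hbP with hbm | hbm
      · -- b before a : from hd b we can walk within P to tl a
        obtain ⟨x, y, hx, hq1, hq2⟩ := hp1.split hbm
        exfalso
        refine ha1 (hprop y (hd b) (tl a) hq2 (fun c hc => ?_) hb2)
        rw [hPS, Set.mem_setOf_eq, hPe, hx]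
        simp [hc]
      · rcases List.mem_cons.1 hbm with rfl | hbm
        · rfl
        · obtain ⟨x, y, hx, hq1, hq2⟩ := hp2.split hbm
          exfalso
          refine hb1 (hprop x (hd a) (tl b) hq1 (fun c hc => ?_) ha2)
          rw [hPS, Set.mem_setOf_eq, hPe, hx]
          simp [hc]
    rcases Set.eq_empty_or_nonempty {a : A | tl a ∉ U ∧ hd a ∈ U} with he | ⟨a, ha⟩
    · unfold cutVal
      rw [show {a : A | tl a ∉ U ∧ hd a ∈ U} = ∅ from he]
      simp
    · have hsub : {a : A | tl a ∉ U ∧ hd a ∈ U} ⊆ {a} := by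
        intro b hb
        rw [huniq b hb a ha]
        rfl
      calc cutVal tl hd U ≤ ({a} : Set A).ncard := Set.ncard_le_ncard hsub (Set.toFinite _)
      _ = 1 := Set.ncard_singleton a

end Menger

section Degree
variable [Finite A] [Finite V] {T : Set V} {U : Set V}

theorem cross_of_walk {x y : V} {W : List A} (h : IsArcWalk tl hd x y W)
    (hx : x ∉ U) (hy : y ∈ U) : ∃ a ∈ W, tl a ∉ U ∧ hd a ∈ U := by
  induction W generalizing x with
  | nil => exact absurd ((isArcWalk_nil.1 h) ▸ hy) hx
  | cons a W ih =>
    obtain ⟨hta, h2⟩ := isArcWalk_cons.1 h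
    by_cases hha : hd a ∈ U
    · exact ⟨a, List.mem_cons_self, hta ▸ hx, hha⟩
    · obtain ⟨b, hb, hb2⟩ := ih h2 hha
      exact ⟨b, List.mem_cons_of_mem _ hb, hb2⟩

theorem lam_le_cutVal (hU : t ∈ U) (hsU : s ∉ U) : lam tl hd s t ≤ cutVal tl hd U := by
  refine csSup_le ⟨0, zero_mem_lamSet⟩ ?_
  rintro k ⟨P, hw, hdisj⟩
  have hcross : ∀ i : Fin k, ∃ a ∈ P i, tl a ∉ U ∧ hd a ∈ U :=
    fun i => cross_of_walk (hw i) hsU hU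
  choose f hf1 hf2 using hcross
  have hinj : Function.Injective (fun i => (⟨f i, hf2 i⟩ :
      {a : A // a ∈ {a | tl a ∉ U ∧ hd a ∈ U}})) := by
    intro i j hij
    by_contra hne
    have : f i = f j := congrArg Subtype.val hij
    exact hdisj i j hne (f i) (hf1 i) (this ▸ hf1 j)
  have := Nat.card_le_card_of_injective _ hinj
  rw [Nat.card_eq_fintype_card (α := Fin k), Fintype.card_fin] at this
  exact le_of_le_of_eq this (Nat.card_coe_set_eq _)

theorem cutVal_submod (X Y : Set V) :
    cutVal tl hd (X ∩ Y) + cutVal tl hd (X ∪ Y) ≤ cutVal tl hd X + cutVal tl hd Y := by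
  unfold cutVal
  have h1 : {a : A | tl a ∉ X ∩ Y ∧ hd a ∈ X ∩ Y} ∪ {a | tl a ∉ X ∪ Y ∧ hd a ∈ X ∪ Y}
      ⊆ {a | tl a ∉ X ∧ hd a ∈ X} ∪ {a | tl a ∉ Y ∧ hd a ∈ Y} := by
    intro a ha
    simp only [Set.mem_union, Set.mem_setOf_eq, Set.mem_inter_iff, Set.mem_union] at ha ⊢
    tauto
  have h2 : {a : A | tl a ∉ X ∩ Y ∧ hd a ∈ X ∩ Y} ∩ {a | tl a ∉ X ∪ Y ∧ hd a ∈ X ∪ Y}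
      ⊆ {a | tl a ∉ X ∧ hd a ∈ X} ∩ {a | tl a ∉ Y ∧ hd a ∈ Y} := by
    intro a ha
    simp only [Set.mem_inter_iff, Set.mem_setOf_eq, Set.mem_union] at ha ⊢
    tauto
  have e1 := Set.ncard_union_add_ncard_inter {a : A | tl a ∉ X ∩ Y ∧ hd a ∈ X ∩ Y}
    {a | tl a ∉ X ∪ Y ∧ hd a ∈ X ∪ Y} (Set.toFinite _) (Set.toFinite _)
  have e2 := Set.ncard_union_add_ncard_inter {a : A | tl a ∉ X ∧ hd a ∈ X}
    {a | tl a ∉ Y ∧ hd a ∈ Y} (Set.toFinite _) (Set.toFinite _)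
  have i1 := Set.ncard_le_ncard h1 (Set.toFinite _)
  have i2 := Set.ncard_le_ncard h2 (Set.toFinite _)
  omega

/-- every arc lies in some 2-cut -/
theorem arc_two_cut (hacyc : Acyclic tl hd) (hmin : TwoMinimal tl hd s T)
    (hsT : s ∉ T) (e : A) :
    ∃ U : Set V, (tl e ∉ U ∧ hd e ∈ U) ∧ s ∉ U ∧ (∃ t' ∈ T, t' ∈ U) ∧
      cutVal tl hd U = 2 := by
  obtain ⟨t', ht', hlt⟩ := hmin.2 e
  have hs := no_into_source hacyc hmin hsT
  have ht's : t' ≠ s := ne_source_of_mem ht' hsT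
  obtain ⟨U, htU, hsU, hcut'⟩ := cut_of_lam_lt_two (hacyc.delete (e := e))
    (fun b => hs b.1) ht's hlt
  have hsub : {a : A | tl a ∉ U ∧ hd a ∈ U}
      ⊆ (Subtype.val '' {b : {b : A // b ≠ e} | tl b.1 ∉ U ∧ hd b.1 ∈ U}) ∪ {e} := by
    intro a ha
    rcases eq_or_ne a e with rfl | hne
    · exact Or.inr rfl
    · exact Or.inl ⟨⟨a, hne⟩, ha, rfl⟩
  have himg : (Subtype.val '' {b : {b : A // b ≠ e} | tl b.1 ∉ U ∧ hd b.1 ∈ U}).ncard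
      = cutVal (fun b : {b : A // b ≠ e} => tl b.1) (fun b => hd b.1) U :=
    Set.ncard_image_of_injective _ Subtype.val_injective
  have hcutle : cutVal tl hd U ≤ 2 := by
    calc cutVal tl hd U
        ≤ ((Subtype.val '' {b : {b : A // b ≠ e} | tl b.1 ∉ U ∧ hd b.1 ∈ U}) ∪ {e}).ncard :=
          Set.ncard_le_ncard hsub (Set.toFinite _)
      _ ≤ _ + ({e} : Set A).ncard := Set.ncard_union_le _ _
      _ ≤ 1 + 1 := by rw [himg, Set.ncard_singleton]; omega
  have hge : 2 ≤ cutVal tl hd U := le_trans (hmin.1 t' ht') (lam_le_cutVal htU hsU)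
  have hcute : tl e ∉ U ∧ hd e ∈ U := by
    by_contra hc
    have hsub2 : {a : A | tl a ∉ U ∧ hd a ∈ U}
        ⊆ Subtype.val '' {b : {b : A // b ≠ e} | tl b.1 ∉ U ∧ hd b.1 ∈ U} := by
      intro a ha
      rcases eq_or_ne a e with rfl | hne
      · exact absurd ha hc
      · exact ⟨⟨a, hne⟩, ha, rfl⟩
    have : cutVal tl hd U ≤ 1 := by
      calc cutVal tl hd U ≤ _ := Set.ncard_le_ncard hsub2 (Set.toFinite _)
        _ = _ := himg
        _ ≤ 1 := hcut'
    omega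
  exact ⟨U, hcute, hsU, ⟨t', ht', htU⟩, le_antisymm hcutle hge⟩

theorem ncard_triple_le {C : Set A} {e₁ e₂ e₃ : A} (h12 : e₁ ≠ e₂) (h13 : e₁ ≠ e₃)
    (h23 : e₂ ≠ e₃) (h1 : e₁ ∈ C) (h2 : e₂ ∈ C) (h3 : e₃ ∈ C) [Finite A] :
    3 ≤ C.ncard := by
  have hsub : {e₁, e₂, e₃} ⊆ C := by
    rintro x (rfl | rfl | rfl) <;> assumption
  have h3' : ({e₁, e₂, e₃} : Set A).ncard = 3 := by
    rw [Set.ncard_insert_of_notMem (by simp [h12, h13]) (Set.toFinite _),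
      Set.ncard_insert_of_notMem (by simp [h23]) (Set.toFinite _), Set.ncard_singleton]
  calc 3 = ({e₁, e₂, e₃} : Set A).ncard := h3'.symm
    _ ≤ C.ncard := Set.ncard_le_ncard hsub (Set.toFinite _)

/-- **2-minimality forces in-degree at most 2** -/
theorem inDeg_le_two (hacyc : Acyclic tl hd) (hmin : TwoMinimal tl hd s T)
    (hsT : s ∉ T) (u : V) : inDeg hd u ≤ 2 := by
  by_contra hdeg
  push_neg at hdeg
  unfold inDeg at hdeg
  -- extract three distinct arcs entering u
  have h1 : ({a : A | hd a = u}).Nonempty := by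
    rw [← Set.ncard_pos (Set.toFinite _)]
    omega
  obtain ⟨e₁, he₁⟩ := h1
  have hn2 : 2 ≤ ({a : A | hd a = u} \ {e₁}).ncard := by
    rw [Set.ncard_diff_singleton_of_mem he₁]
    omega
  have h2 : ({a : A | hd a = u} \ {e₁}).Nonempty := by
    rw [← Set.ncard_pos (Set.toFinite _)]
    omega
  obtain ⟨e₂, he₂⟩ := h2
  have h3 : (({a : A | hd a = u} \ {e₁}) \ {e₂}).Nonempty := by
    rw [← Set.ncard_pos (Set.toFinite _),
      Set.ncard_diff_singleton_of_mem he₂]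
    omega
  obtain ⟨e₃, he₃⟩ := h3
  have hd1 : hd e₁ = u := he₁
  have hd2 : hd e₂ = u := he₂.1
  have hd3 : hd e₃ = u := he₃.1.1
  have h12 : e₁ ≠ e₂ := fun h => (h ▸ he₂).2 rfl
  have h13 : e₁ ≠ e₃ := fun h => (h ▸ he₃).1.2 rfl
  have h23 : e₂ ≠ e₃ := fun h => (h ▸ he₃).2 rfl
  obtain ⟨U₁, hc1, hs1, ⟨t₁, ht₁, ht₁U⟩, hv1⟩ := arc_two_cut hacyc hmin hsT e₁
  obtain ⟨U₂, hc2, hs2, ⟨t₂, ht₂, ht₂U⟩, hv2⟩ := arc_two_cut hacyc hmin hsT e₂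
  obtain ⟨U₃, hc3, hs3, ⟨t₃, ht₃, ht₃U⟩, hv3⟩ := arc_two_cut hacyc hmin hsT e₃
  have hu1 : u ∈ U₁ := hd1 ▸ hc1.2
  have hu2 : u ∈ U₂ := hd2 ▸ hc2.2
  have hu3 : u ∈ U₃ := hd3 ▸ hc3.2
  -- first submodularity: X = U₁ ∩ U₂ has cut ≤ 2
  have hcutu : 2 ≤ cutVal tl hd (U₁ ∪ U₂) :=
    le_trans (hmin.1 t₁ ht₁) (lam_le_cutVal (Or.inl ht₁U) (by simp [hs1, hs2]))
  have hsm1 := cutVal_submod (tl := tl) (hd := hd) U₁ U₂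
  have hX : cutVal tl hd (U₁ ∩ U₂) ≤ 2 := by omega
  -- second submodularity with U₃
  have hcutu2 : 2 ≤ cutVal tl hd ((U₁ ∩ U₂) ∪ U₃) :=
    le_trans (hmin.1 t₃ ht₃) (lam_le_cutVal (Or.inr ht₃U) (by simp [hs1, hs2, hs3]))
  have hsm2 := cutVal_submod (tl := tl) (hd := hd) (U₁ ∩ U₂) U₃
  -- but all three arcs cross U₁ ∩ U₂ ∩ U₃
  have hZ3 : 3 ≤ cutVal tl hd ((U₁ ∩ U₂) ∩ U₃) := by
    refine ncard_triple_le h12 h13 h23 ?_ ?_ ?_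
    · exact ⟨fun h => hc1.1 h.1.1, ⟨⟨hd1 ▸ hu1, hd1 ▸ hu2⟩, hd1 ▸ hu3⟩⟩
    · exact ⟨fun h => hc2.1 h.1.2, ⟨⟨hd2 ▸ hu1, hd2 ▸ hu2⟩, hd2 ▸ hu3⟩⟩
    · exact ⟨fun h => hc3.1 h.2, ⟨⟨hd3 ▸ hu1, hd3 ▸ hu2⟩, hd3 ▸ hu3⟩⟩
  omega

end Degree

section Vectors
variable {F : Type} [Field F] [Fintype F] {q : ℕ}

/-- `q+1` pairwise independent vectors in `F²` -/
noncomputable def vec (e : F ≃ Fin q) : Fin (q + 1) → F × F := fun i =>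
  if h : (i : ℕ) < q then (1, e.symm ⟨i, h⟩) else (0, 1)

theorem vec_ne_zero (e : F ≃ Fin q) (i : Fin (q + 1)) : vec e i ≠ 0 := by
  unfold vec
  split_ifs <;> simp [Prod.ext_iff]

theorem span_pair_of_ne {x y : F × F} (h : ∀ z : F × F, ∃ a b : F, a • x + b • y = z) :
    Submodule.span F {x, y} = ⊤ := by
  refine Submodule.eq_top_iff'.2 fun z => ?_
  obtain ⟨a, b, hab⟩ := h z
  exact hab ▸ Submodule.add_mem _
    (Submodule.smul_mem _ a (Submodule.subset_span (by simp)))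
    (Submodule.smul_mem _ b (Submodule.subset_span (by simp)))

theorem vec_span (e : F ≃ Fin q) {i j : Fin (q + 1)} (hij : i ≠ j) :
    Submodule.span F {vec e i, vec e j} = ⊤ := by
  refine span_pair_of_ne fun z => ?_
  unfold vec
  by_cases hi : (i : ℕ) < q <;> by_cases hj : (j : ℕ) < q
  · rw [dif_pos hi, dif_pos hj]
    set x := e.symm ⟨i, hi⟩ with hx
    set y := e.symm ⟨j, hj⟩ with hy
    have hxy : x ≠ y := by
      intro h
      apply hij
      have h2 := e.symm.injective h
      injection h2 with hval
      exact Fin.ext hval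
    have hsub : x - y ≠ 0 := sub_ne_zero.2 hxy
    refine ⟨(z.2 - z.1 * y) / (x - y), z.1 - (z.2 - z.1 * y) / (x - y), ?_⟩
    have key : (z.2 - z.1 * y) / (x - y) * x + (z.1 - (z.2 - z.1 * y) / (x - y)) * y
        = z.2 := by
      field_simp
      ring
    rw [Prod.ext_iff]
    constructor
    · simp [Prod.smul_def, smul_eq_mul]
    · simpa [Prod.smul_def, smul_eq_mul] using key
  · rw [dif_pos hi, dif_neg hj]
    set x := e.symm ⟨i, hi⟩ with hx
    refine ⟨z.1, z.2 - z.1 * x, ?_⟩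
    rw [Prod.ext_iff]
    constructor
    · simp [Prod.smul_def, smul_eq_mul]
    · simp [Prod.smul_def, smul_eq_mul]
  · rw [dif_neg hi, dif_pos hj]
    set y := e.symm ⟨j, hj⟩ with hy
    refine ⟨z.2 - z.1 * y, z.1, ?_⟩
    rw [Prod.ext_iff]
    constructor
    · simp [Prod.smul_def, smul_eq_mul]
    · simp [Prod.smul_def, smul_eq_mul]
  · exfalso
    apply hij
    have h1 : (i : ℕ) = q := le_antisymm (Nat.lt_succ_iff.1 i.isLt) (not_lt.1 hi)
    have h2 : (j : ℕ) = q := le_antisymm (Nat.lt_succ_iff.1 j.isLt) (not_lt.1 hj)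
    exact Fin.ext (h1.trans h2.symm)

end Vectors

section Assembly
variable [Finite A] [Finite V] {T : Set V}

theorem span_top_of_indeg_two {F : Type} [Field F] [Fintype F] {q : ℕ}
    (e : F ≃ Fin q) (C : (subtreeGraph tl hd).Coloring (Fin (q + 1)))
    (hacyc : Acyclic tl hd) (hmin : TwoMinimal tl hd s T) (hsT : s ∉ T)
    {v : V} (h2 : inDeg hd v = 2) :
    Submodule.span F ((fun a => vec e (C (Quot.mk (SubtreeRel tl hd) a))) '' {b | hd b = v})
      = ⊤ := by
  have h2' : ({x : A | hd x = v}).ncard = 2 := h2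
  obtain ⟨b, c, hbc, hset⟩ := Set.ncard_eq_two.1 h2'
  have hdb : hd b = v := by
    have : b ∈ {x : A | hd x = v} := by rw [hset]; exact Or.inl rfl
    exact this
  have hdc : hd c = v := by
    have : c ∈ {x : A | hd x = v} := by rw [hset]; exact Or.inr rfl
    exact this
  have hne := subtree_ne hacyc hmin hsT hbc (hdb.trans hdc.symm)
  have hadj : (subtreeGraph tl hd).Adj (Quot.mk _ b) (Quot.mk _ c) :=
    ⟨hne, b, c, rfl, rfl, hdb.trans hdc.symm, by rw [hdb]; exact h2⟩
  have hcne := C.valid hadj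
  have himg : (fun a => vec e (C (Quot.mk (SubtreeRel tl hd) a))) '' {x : A | hd x = v}
      = {vec e (C (Quot.mk _ b)), vec e (C (Quot.mk _ c))} := by
    rw [hset, Set.image_pair]
  rw [himg]
  exact vec_span e hcne

end Assembly

/-- Lemma 2: if the subtree graph of a 2-minimal acyclic multicast
network is properly `(q+1)`-colorable, `q` the size of the field `F`, then the network
admits a rate-2 linear coding solution over `F`. -/
theorem codingSolution_of_subtreeGraph_colorable
    {V A : Type} [Fintype V] [Fintype A] (tl hd : A → V) (s : V) (T : Set V)
    (hsT : s ∉ T) (hacyc : Acyclic tl hd) (hmin : TwoMinimal tl hd s T)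
    (q : ℕ) (F : Type) [Field F] [Fintype F] (hF : Fintype.card F = q)
    (hcol : (subtreeGraph tl hd).Colorable (q + 1)) :
    ∃ φ : A → F × F, IsCodingSolution tl hd s T φ := by
  classical
  obtain ⟨C⟩ := hcol
  let e : F ≃ Fin q := Fintype.equivFinOfCardEq hF
  refine ⟨fun a => vec e (C (Quot.mk (SubtreeRel tl hd) a)),
    fun a => vec_ne_zero e _, ?_, ?_⟩
  · intro a ha
    obtain ⟨b0, hb0⟩ := exists_in_arc hmin hsT ha
    have hle : inDeg hd (tl a) ≤ 2 := inDeg_le_two hacyc hmin hsT (tl a)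
    have hge : 1 ≤ inDeg hd (tl a) := by
      have hne : ({x : A | hd x = tl a}).Nonempty := ⟨b0, hb0⟩
      exact (Set.ncard_pos (Set.toFinite _)).2 hne
    rcases (by omega : inDeg hd (tl a) = 1 ∨ inDeg hd (tl a) = 2) with h1 | h2
    · have h1' : ({x : A | hd x = tl a}).ncard = 1 := h1
      obtain ⟨b, hb⟩ := Set.ncard_eq_one.1 h1'
      have hbm : hd b = tl a := by
        have : b ∈ {x : A | hd x = tl a} := by rw [hb]; rfl
        exact this
      have hba : SubtreeRel tl hd b a := ⟨hbm, by rw [hbm]; exact h1⟩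
      have hq : Quot.mk (SubtreeRel tl hd) b = Quot.mk (SubtreeRel tl hd) a :=
        Quot.sound hba
      refine Submodule.subset_span ⟨b, hbm, ?_⟩
      simp only [hq]
    · rw [span_top_of_indeg_two e C hacyc hmin hsT h2]
      trivial
  · intro t' ht'
    have hst : s ≠ t' := (ne_source_of_mem ht' hsT).symm
    obtain ⟨p, q', hp, hq', hdisj⟩ := (two_le_lam_iff hst).1 (hmin.1 t' ht')
    have hpne : p ≠ [] := fun h => hst (isArcWalk_nil.1 (h ▸ hp))
    have hqne : q' ≠ [] := fun h => hst (isArcWalk_nil.1 (h ▸ hq'))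
    obtain ⟨ep, hep, hepv⟩ := hp.exists_last hpne
    obtain ⟨ec, hec, hecv⟩ := hq'.exists_last hqne
    have hne : ep ≠ ec := fun h => hdisj ep hep (h ▸ hec)
    have hge : 2 ≤ inDeg hd t' := by
      have hsub : {ep, ec} ⊆ {x : A | hd x = t'} := by
        rintro x (rfl | rfl)
        · exact hepv
        · exact hecv
      calc 2 = ({ep, ec} : Set A).ncard := (Set.ncard_pair hne).symm
        _ ≤ inDeg hd t' := Set.ncard_le_ncard hsub (Set.toFinite _)
    have hle := inDeg_le_two hacyc hmin hsT t'
    have h2 : inDeg hd t' = 2 := le_antisymm hle hge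
    exact span_top_of_indeg_two e C hacyc hmin hsT h2

end NCMinor
end

section
/- For every finite simple graph H with no isolated vertices, there exists a 2-minimal acyclic multicast network whose subtree graph is isomorphic to H. -/
namespace NCMinor

/-! ### Auxiliary lemmas -/

section WalkLemmas
variable {V A : Type}

lemma exists_last_arc (tl hd : A → V) :
    ∀ (p : List A) (u v : V), IsArcWalk tl hd u v p → p ≠ [] → ∃ a ∈ p, hd a = v := by
  intro p
  induction p with
  | nil => intro u v _ h; exact absurd rfl h
  | cons a q ih =>
    intro u v hw _
    obtain ⟨-, hq⟩ := hw
    rcases q with _ | ⟨b, r⟩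
    · exact ⟨a, List.mem_cons_self, hq⟩
    · obtain ⟨c, hc, hcv⟩ := ih (hd a) v hq (by simp)
      exact ⟨c, List.mem_cons_of_mem _ hc, hcv⟩

lemma exists_pred_arc (tl hd : A → V) :
    ∀ (p : List A) (u v : V), IsArcWalk tl hd u v p →
      ∀ b ∈ p, tl b = u ∨ ∃ a ∈ p, hd a = tl b := by
  intro p
  induction p with
  | nil => intro u v _ b hb; simp at hb
  | cons a q ih =>
    intro u v hw b hb
    obtain ⟨ha, hq⟩ := hw
    rcases List.mem_cons.1 hb with rfl | hb'
    · exact Or.inl ha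
    · rcases ih (hd a) v hq b hb' with h | ⟨c, hc, hcv⟩
      · exact Or.inr ⟨a, List.mem_cons_self, h.symm ▸ rfl⟩
      · exact Or.inr ⟨c, List.mem_cons_of_mem _ hc, hcv⟩

lemma rank_le_of_walk (tl hd : A → V) (r : V → ℕ) (hr : ∀ a, r (tl a) < r (hd a)) :
    ∀ (p : List A) (u v : V), IsArcWalk tl hd u v p → r u ≤ r v := by
  intro p
  induction p with
  | nil => intro u v h; exact h ▸ le_rfl
  | cons a q ih =>
    intro u v hw
    obtain ⟨ha, hq⟩ := hw
    exact le_trans (le_of_lt (ha ▸ hr a)) (ih (hd a) v hq)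

lemma acyclic_of_rank (tl hd : A → V) (r : V → ℕ) (hr : ∀ a, r (tl a) < r (hd a)) :
    Acyclic tl hd := by
  intro v p hw
  rcases p with _ | ⟨a, q⟩
  · rfl
  · obtain ⟨ha, hq⟩ := hw
    have h1 := rank_le_of_walk tl hd r hr q (hd a) v hq
    have := hr a
    rw [ha] at this
    omega

lemma lam_lt_two (tl hd : A → V) (s v : V)
    (h : ∀ p q : List A, IsArcWalk tl hd s v p → IsArcWalk tl hd s v q →
      (∀ a ∈ p, a ∉ q) → False) :
    lam tl hd s v < 2 := by
  have h1 : lam tl hd s v ≤ 1 := by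
    have h0 : (0:ℕ) ∈ {k | ∃ P : Fin k → List A,
        (∀ i, IsArcWalk tl hd s v (P i)) ∧
        ∀ i j : Fin k, i ≠ j → ∀ a, a ∈ P i → a ∉ P j} :=
      ⟨fun i => i.elim0, fun i => i.elim0, fun i => i.elim0⟩
    apply csSup_le ⟨0, h0⟩
    rintro k ⟨P, hw, hd2⟩
    by_contra hk
    push_neg at hk
    have h01 : (⟨0, by omega⟩ : Fin k) ≠ ⟨1, by omega⟩ := by simp [Fin.ext_iff]
    exact h (P ⟨0, by omega⟩) (P ⟨1, by omega⟩) (hw _) (hw _)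
      (fun a ha => hd2 _ _ h01 a ha)
  omega

lemma two_le_lam [Fintype A] (tl hd : A → V) (s v : V) (hsv : s ≠ v)
    (p q : List A) (hp : IsArcWalk tl hd s v p) (hq : IsArcWalk tl hd s v q)
    (hdisj : ∀ a ∈ p, a ∉ q) : 2 ≤ lam tl hd s v := by
  apply le_csSup
  · refine ⟨Fintype.card A, ?_⟩
    rintro k ⟨P, hw, hd2⟩
    have hne : ∀ i, P i ≠ [] := by
      intro i hnil
      exact hsv (by have := hw i; rw [hnil] at this; exact this)
    have hinj : Function.Injective (fun i => (P i).head (hne i)) := by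
      intro i j hij
      by_contra hne'
      have hmem : (P i).head (hne i) ∈ P j := by
        rw [show (P i).head (hne i) = (P j).head (hne j) from hij]
        exact List.head_mem _
      exact hd2 i j hne' _ (List.head_mem (hne i)) hmem
    simpa using Fintype.card_le_of_injective _ hinj
  · refine ⟨![p, q], ?_, ?_⟩
    · intro i; fin_cases i <;> simpa
    · intro i j hij a hai haj
      fin_cases i <;> fin_cases j <;>
        (try simp only [Matrix.cons_val_zero, Matrix.cons_val_one,
          Matrix.head_cons] at hai haj) <;>
        first
          | exact absurd rfl hij
          | exact hdisj a hai haj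
          | exact hdisj a haj hai

end WalkLemmas

section Construction
variable {W : Type}

/-- node type of the constructed network -/
abbrev NV (H : SimpleGraph W) : Type := Option (W ⊕ ↥H.edgeSet)

/-- arc type of the constructed network -/
abbrev NA (H : SimpleGraph W) : Type := W ⊕ {p : W × W // H.Adj p.1 p.2}

variable (H : SimpleGraph W)

/-- tail map -/
def ntl : NA H → NV H
  | Sum.inl _ => none
  | Sum.inr p => some (Sum.inl p.1.1)

/-- head map -/
def nhd : NA H → NV H
  | Sum.inl w => some (Sum.inl w)
  | Sum.inr p => some (Sum.inr ⟨s(p.1.1, p.1.2), H.mem_edgeSet.2 p.2⟩)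

variable {H}

lemma nhd_ne_none (a : NA H) : nhd H a ≠ none := by
  rcases a with w | p <;> simp [nhd]

lemma nhd_eq_inl {a : NA H} {w : W} : nhd H a = some (Sum.inl w) ↔ a = Sum.inl w := by
  rcases a with w' | p <;> simp [nhd]

lemma ntl_ne_inr (a : NA H) (e : ↥H.edgeSet) : ntl H a ≠ some (Sum.inr e) := by
  rcases a with w | p <;> simp [ntl]

lemma edge_rep (e : ↥H.edgeSet) : ∃ x y, H.Adj x y ∧ e.1 = s(x, y) := by
  obtain ⟨z, hz⟩ := e
  induction z using Sym2.ind with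
  | _ x y => exact ⟨x, y, (SimpleGraph.mem_edgeSet H).1 hz, rfl⟩

lemma inDeg_none : inDeg (nhd H) (none : NV H) = 0 := by
  have : {a : NA H | nhd H a = none} = ∅ := by
    ext a; simp [nhd_ne_none a]
  rw [inDeg, this, Set.ncard_empty]

lemma inDeg_inl (w : W) : inDeg (nhd H) (some (Sum.inl w) : NV H) = 1 := by
  have : {a : NA H | nhd H a = some (Sum.inl w)} = {Sum.inl w} := by
    ext a; simp [nhd_eq_inl]
  rw [inDeg, this, Set.ncard_singleton]

lemma nhd_eq_inr {p : {p : W × W // H.Adj p.1 p.2}} {e : ↥H.edgeSet} :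
    nhd H (Sum.inr p) = some (Sum.inr e) ↔ (s(p.1.1, p.1.2) : Sym2 W) = e.1 := by
  simp only [nhd, Option.some.injEq, Sum.inr.injEq]
  exact ⟨fun h => congrArg Subtype.val h, fun h => Subtype.ext h⟩

lemma inDeg_inr {x y : W} (hxy : H.Adj x y) (e : ↥H.edgeSet) (he : e.1 = s(x, y)) :
    inDeg (nhd H) (some (Sum.inr e) : NV H) = 2 := by
  have hset : {a : NA H | nhd H a = some (Sum.inr e)} =
      {Sum.inr ⟨(x, y), hxy⟩, Sum.inr ⟨(y, x), hxy.symm⟩} := by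
    ext a
    rcases a with w | p
    · simp [nhd]
    · simp only [Set.mem_setOf_eq, nhd_eq_inr, he, Set.mem_insert_iff,
        Set.mem_singleton_iff, Sum.inr.injEq, Subtype.ext_iff]
      rw [Sym2.eq_iff]
      constructor
      · rintro (⟨h1, h2⟩ | ⟨h1, h2⟩)
        · left; exact Prod.ext h1 h2
        · right; exact Prod.ext h1 h2
      · rintro (h | h) <;> rw [h] <;> simp
  rw [inDeg, hset, Set.ncard_pair]
  simp only [ne_eq, Sum.inr.injEq, Subtype.mk.injEq, Prod.mk.injEq, not_and]
  intro h; exact absurd h hxy.ne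

end Construction
section Construction2
variable {W : Type} {H : SimpleGraph W}

/-- receivers -/
def NT (H : SimpleGraph W) : Set (NV H) :=
  Set.range fun e : ↥H.edgeSet => some (Sum.inr e)

lemma nAcyclic : Acyclic (ntl H) (nhd H) := by
  apply acyclic_of_rank _ _
    (fun v => Option.elim v 0 (Sum.elim (fun _ => 1) (fun _ => 2)))
  rintro (w | p) <;> simp [ntl, nhd]

lemma arc_to_inr {a : NA H} {e : ↥H.edgeSet} (h : nhd H a = some (Sum.inr e)) :
    ∃ r : {p : W × W // H.Adj p.1 p.2}, a = Sum.inr r ∧ (s(r.1.1, r.1.2) : Sym2 W) = e.1 := by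
  rcases a with w | r
  · simp [nhd] at h
  · exact ⟨r, rfl, nhd_eq_inr.1 h⟩

lemma pair_eq {r : W × W} {x y : W} (h : (s(r.1, r.2) : Sym2 W) = s(x, y)) :
    r = (x, y) ∨ r = (y, x) := by
  rw [Sym2.eq_iff] at h
  rcases h with ⟨h1, h2⟩ | ⟨h1, h2⟩
  · left; exact Prod.ext h1 h2
  · right; exact Prod.ext h1 h2

lemma n_two_le [Fintype W] [DecidableEq W] [DecidableRel H.Adj] (e : ↥H.edgeSet) :
    2 ≤ lam (ntl H) (nhd H) none (some (Sum.inr e)) := by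
  obtain ⟨x, y, hxy, he⟩ := edge_rep e
  have hne : x ≠ y := hxy.ne
  apply two_le_lam (ntl H) (nhd H) none (some (Sum.inr e)) (by simp)
    [Sum.inl x, Sum.inr ⟨(x, y), hxy⟩] [Sum.inl y, Sum.inr ⟨(y, x), hxy.symm⟩]
  · exact ⟨rfl, rfl, nhd_eq_inr.2 he.symm⟩
  · exact ⟨rfl, rfl, nhd_eq_inr.2 (Sym2.eq_swap.trans he.symm)⟩
  · intro a ha hb
    simp only [List.mem_cons, List.mem_singleton, List.not_mem_nil, or_false] at ha hb
    rcases ha with rfl | rfl <;> rcases hb with h | h <;>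
      simp_all [Prod.ext_iff]

/-- after deleting an arc incident to the `w`-side, no node of in-degree 1 equal to `n_w`
can be reached; helper for the deletion argument. -/
lemma no_pred_w (a₀ : NA H) (hw : a₀ = Sum.inl (Sum.elim id (fun p => p.1.1) a₀))
    (w : W) (hweq : a₀ = Sum.inl w) {e : ↥H.edgeSet}
    (l : List {b : NA H // b ≠ a₀})
    (hl : IsArcWalk (fun b => ntl H b.1) (fun b => nhd H b.1) none (some (Sum.inr e)) l)
    (b : {b : NA H // b ≠ a₀}) (hb : b ∈ l)
    (htl : ntl H b.1 = some (Sum.inl w)) : False := by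
  rcases exists_pred_arc _ _ l none _ hl b hb with h | ⟨c, _, hcv⟩
  · rw [htl] at h; exact absurd h (by simp)
  · rw [htl] at hcv
    exact c.2 (nhd_eq_inl.1 hcv ▸ hweq ▸ rfl)

lemma n_del (hno : ∀ w : W, ∃ w', H.Adj w w') (a₀ : NA H) :
    ∃ e : ↥H.edgeSet,
      lam (fun b : {b : NA H // b ≠ a₀} => ntl H b.1) (fun b => nhd H b.1) none
        (some (Sum.inr e)) < 2 := by
  rcases a₀ with w | p₀
  · -- deleted the source arc of `w`
    obtain ⟨w', hww'⟩ := hno w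
    refine ⟨⟨s(w, w'), H.mem_edgeSet.2 hww'⟩, lam_lt_two _ _ _ _ ?_⟩
    intro p q hp hq hdisj
    have hkey : ∀ l : List {b : NA H // b ≠ Sum.inl w},
        IsArcWalk (fun b => ntl H b.1) (fun b => nhd H b.1) none
          (some (Sum.inr ⟨s(w, w'), H.mem_edgeSet.2 hww'⟩)) l →
        (∃ b ∈ l, b.1 = Sum.inr ⟨(w, w'), hww'⟩) ∨
        (∃ b ∈ l, b.1 = Sum.inr ⟨(w', w), hww'.symm⟩) := by
      intro l hl
      have hlne : l ≠ [] := by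
        rintro rfl
        exact Option.some_ne_none _ (show (none : NV H) = _ from hl).symm
      obtain ⟨b, hb, hbv⟩ := exists_last_arc _ _ l none _ hl hlne
      obtain ⟨r, hr, hre⟩ := arc_to_inr hbv
      rcases pair_eq hre with h | h
      · exact Or.inl ⟨b, hb, by rw [hr]; congr 1; exact Subtype.ext h⟩
      · exact Or.inr ⟨b, hb, by rw [hr]; congr 1; exact Subtype.ext h⟩
    have hnow : ∀ (l : List {b : NA H // b ≠ Sum.inl w}),
        IsArcWalk (fun b => ntl H b.1) (fun b => nhd H b.1) none
          (some (Sum.inr ⟨s(w, w'), H.mem_edgeSet.2 hww'⟩)) l →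
        ∀ b ∈ l, b.1 = Sum.inr ⟨(w, w'), hww'⟩ → False := by
      intro l hl b hb hbv
      exact no_pred_w (Sum.inl w) rfl w rfl l hl b hb (by rw [hbv]; rfl)
    rcases hkey p hp with ⟨b, hb, hbv⟩ | ⟨b, hb, hbv⟩
    · exact hnow p hp b hb hbv
    · rcases hkey q hq with ⟨b', hb', hbv'⟩ | ⟨b', hb', hbv'⟩
      · exact hnow q hq b' hb' hbv'
      · have : b = b' := Subtype.ext (hbv.trans hbv'.symm)
        exact hdisj b hb (this ▸ hb')
  · -- deleted an arc into receiver `e₀`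
    refine ⟨⟨s(p₀.1.1, p₀.1.2), H.mem_edgeSet.2 p₀.2⟩, lam_lt_two _ _ _ _ ?_⟩
    intro p q hp hq hdisj
    have hkey : ∀ l : List {b : NA H // b ≠ Sum.inr p₀},
        IsArcWalk (fun b => ntl H b.1) (fun b => nhd H b.1) none
          (some (Sum.inr ⟨s(p₀.1.1, p₀.1.2), H.mem_edgeSet.2 p₀.2⟩)) l →
        ∃ b ∈ l, b.1 = Sum.inr ⟨(p₀.1.2, p₀.1.1), p₀.2.symm⟩ := by
      intro l hl
      have hlne : l ≠ [] := by
        rintro rfl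
        exact Option.some_ne_none _ (show (none : NV H) = _ from hl).symm
      obtain ⟨b, hb, hbv⟩ := exists_last_arc _ _ l none _ hl hlne
      obtain ⟨r, hr, hre⟩ := arc_to_inr hbv
      rcases pair_eq hre with h | h
      · exfalso
        exact b.2 (by rw [hr]; congr 1; exact Subtype.ext (by rw [h]))
      · exact ⟨b, hb, by rw [hr]; congr 1; exact Subtype.ext h⟩
    obtain ⟨b, hb, hbv⟩ := hkey p hp
    obtain ⟨b', hb', hbv'⟩ := hkey q hq
    have : b = b' := Subtype.ext (hbv.trans hbv'.symm)
    exact hdisj b hb (this ▸ hb')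

lemma nTwoMinimal [Fintype W] [DecidableEq W] [DecidableRel H.Adj]
    (hno : ∀ w : W, ∃ w', H.Adj w w') :
    TwoMinimal (ntl H) (nhd H) none (NT H) := by
  constructor
  · rintro t ⟨e, rfl⟩
    exact n_two_le e
  · intro a₀
    obtain ⟨e, he⟩ := n_del hno a₀
    exact ⟨some (Sum.inr e), ⟨e, rfl⟩, he⟩

end Construction2
section SubtreeIso
variable {W : Type} {H : SimpleGraph W}

/-- the subtree containing an arc, as a vertex of `H`. -/
def nf : NA H → W := Sum.elim id (fun p => p.1.1)

lemma inDeg_nhd_inr (p : {p : W × W // H.Adj p.1 p.2}) :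
    inDeg (nhd H) (nhd H (Sum.inr p)) = 2 :=
  inDeg_inr p.2 _ rfl

lemma nf_rel {a b : NA H} (h : SubtreeRel (ntl H) (nhd H) a b) : nf a = nf b := by
  obtain ⟨hab, hdeg⟩ := h
  rcases a with w | p
  · rcases b with w' | r
    · simp [ntl, nhd] at hab
    · simp only [nhd, ntl, Option.some.injEq, Sum.inl.injEq] at hab
      simpa [nf] using hab
  · rw [inDeg_nhd_inr] at hdeg
    omega

/-- subtrees of the constructed network correspond to vertices of `H`. -/
def nq : Subtrees (ntl H) (nhd H) → W := Quot.lift nf (fun _ _ h => nf_rel h)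

lemma mk_eq_inl (a : NA H) :
    (Quot.mk _ a : Subtrees (ntl H) (nhd H)) = Quot.mk _ (Sum.inl (nf a)) := by
  rcases a with w | p
  · rfl
  · exact (Quot.sound ⟨rfl, inDeg_inl p.1.1⟩).symm

/-- the subtree decomposition is in bijection with vertices of `H`. -/
def nEquiv : Subtrees (ntl H) (nhd H) ≃ W where
  toFun := nq
  invFun w := Quot.mk _ (Sum.inl w)
  left_inv := by
    apply Quot.ind
    intro a
    exact (mk_eq_inl a).symm
  right_inv w := rfl

lemma nq_mk (a : NA H) : nq (Quot.mk _ a) = nf a := rfl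

/-- the subtree graph of the constructed network is isomorphic to `H`. -/
def nIso : subtreeGraph (ntl H) (nhd H) ≃g H where
  toEquiv := nEquiv
  map_rel_iff' := by
    intro x y
    show H.Adj (nq x) (nq y) ↔ (subtreeGraph (ntl H) (nhd H)).Adj x y
    constructor
    · intro h
      obtain ⟨a, rfl⟩ := Quot.exists_rep x
      obtain ⟨b, rfl⟩ := Quot.exists_rep y
      rw [nq_mk, nq_mk] at h
      refine ⟨?_, Sum.inr ⟨(nf a, nf b), h⟩, Sum.inr ⟨(nf b, nf a), h.symm⟩, ?_, ?_, ?_, ?_⟩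
      · intro heq
        have : nf a = nf b := congrArg nq heq
        exact h.ne this
      · exact (mk_eq_inl _).trans (mk_eq_inl a).symm
      · exact (mk_eq_inl _).trans (mk_eq_inl b).symm
      · exact nhd_eq_inr.2 Sym2.eq_swap.symm
      · exact inDeg_nhd_inr _
    · rintro ⟨hxy, a, b, ha, hb, hab, hdeg⟩
      subst ha hb
      rcases a with w | p
      · rw [show nhd H (Sum.inl w) = some (Sum.inl w) from rfl, inDeg_inl] at hdeg
        omega
      rcases b with w' | r
      · rw [hab, show nhd H (Sum.inl w') = some (Sum.inl w') from rfl, inDeg_inl] at hdeg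
        omega
      have hsym : (s(p.1.1, p.1.2) : Sym2 W) = s(r.1.1, r.1.2) := by
        have h' := hab
        simp only [nhd, Option.some.injEq, Sum.inr.injEq, Subtype.mk.injEq] at h'
        exact h'
      rcases pair_eq hsym with hpr | hpr
      · exfalso
        apply hxy
        rw [mk_eq_inl (Sum.inr p), mk_eq_inl (Sum.inr r)]
        congr 2
        simp [nf, hpr]
      · rw [nq_mk, nq_mk]
        have h1 : nf (Sum.inr p) = p.1.1 := rfl
        have h2 : nf (Sum.inr r) = r.1.1 := rfl
        rw [h1, h2, show r.1.1 = p.1.2 from by rw [hpr]]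
        exact p.2

end SubtreeIso
section Transfer
variable {V A V2 A2 : Type} (eV : V ≃ V2) (eA : A ≃ A2) (tl hd : A → V)

lemma isArcWalk_map_s2 :
    ∀ (p : List A) (u v : V),
      IsArcWalk (fun a2 => eV (tl (eA.symm a2))) (fun a2 => eV (hd (eA.symm a2)))
        (eV u) (eV v) (p.map eA) ↔ IsArcWalk tl hd u v p := by
  intro p
  induction p with
  | nil => intro u v; exact eV.injective.eq_iff
  | cons a q ih =>
    intro u v
    constructor
    · rintro ⟨h1, h2⟩
      simp only [Equiv.symm_apply_apply] at h1 h2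
      exact ⟨eV.injective h1, (ih (hd a) v).1 h2⟩
    · rintro ⟨h1, h2⟩
      refine ⟨by simp [h1], ?_⟩
      show IsArcWalk _ _ (eV (hd (eA.symm (eA a)))) (eV v) (q.map eA)
      rw [Equiv.symm_apply_apply]
      exact (ih (hd a) v).2 h2

lemma lam_map (s v : V) :
    lam (fun a2 => eV (tl (eA.symm a2))) (fun a2 => eV (hd (eA.symm a2))) (eV s) (eV v)
      = lam tl hd s v := by
  unfold lam
  congr 1
  ext k
  constructor
  · rintro ⟨P, hw, hdisj⟩
    refine ⟨fun i => (P i).map eA.symm, fun i => ?_, ?_⟩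
    · rw [← isArcWalk_map_s2 eV eA tl hd]
      have : ((P i).map eA.symm).map eA = P i := by
        rw [List.map_map]
        simp
      rw [this]
      exact hw i
    · intro i j hij a hai haj
      have h1 : eA a ∈ P i := by
        obtain ⟨b, hb, hba⟩ := List.mem_map.1 hai
        rwa [show eA a = b from by rw [← hba]; simp] 
      have h2 : eA a ∈ P j := by
        obtain ⟨b, hb, hba⟩ := List.mem_map.1 haj
        rwa [show eA a = b from by rw [← hba]; simp]
      exact hdisj i j hij (eA a) h1 h2
  · rintro ⟨P, hw, hdisj⟩
    refine ⟨fun i => (P i).map eA, fun i => (isArcWalk_map_s2 eV eA tl hd (P i) s v).2 (hw i), ?_⟩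
    intro i j hij a hai haj
    obtain ⟨b, hb, hba⟩ := List.mem_map.1 hai
    obtain ⟨c, hc, hca⟩ := List.mem_map.1 haj
    have : b = c := eA.injective (hba.trans hca.symm)
    exact hdisj i j hij b hb (this ▸ hc)

lemma inDeg_map (v : V) :
    inDeg (fun a2 => eV (hd (eA.symm a2))) (eV v) = inDeg hd v := by
  unfold inDeg
  have : {a2 | eV (hd (eA.symm a2)) = eV v} = eA '' {a | hd a = v} := by
    ext a2
    simp only [Set.mem_setOf_eq, eV.injective.eq_iff, Set.mem_image]
    constructor
    · intro h
      exact ⟨eA.symm a2, h, by simp⟩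
    · rintro ⟨b, hb, rfl⟩
      simpa using hb
  rw [this, Set.ncard_image_of_injective _ eA.injective]

/-- deleting corresponding arcs gives equivalent arc types. -/
def restrictEquiv (a2 : A2) : {b : A // b ≠ eA.symm a2} ≃ {b2 : A2 // b2 ≠ a2} where
  toFun b := ⟨eA b.1, fun h => b.2 (eA.eq_symm_apply.2 h)⟩
  invFun b2 := ⟨eA.symm b2.1, fun h => b2.2 (eA.symm.injective h)⟩
  left_inv b := Subtype.ext (eA.symm_apply_apply _)
  right_inv b2 := Subtype.ext (eA.apply_symm_apply _)

lemma acyclic_map (h : Acyclic tl hd) :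
    Acyclic (fun a2 => eV (tl (eA.symm a2))) (fun a2 => eV (hd (eA.symm a2))) := by
  intro v2 p2 hw
  have hv : v2 = eV (eV.symm v2) := by simp
  have hp : p2 = (p2.map eA.symm).map eA := by
    rw [List.map_map]; simp
  rw [hv, hp] at hw
  have := (isArcWalk_map_s2 eV eA tl hd (p2.map eA.symm) (eV.symm v2) (eV.symm v2)).1 hw
  have hnil := h (eV.symm v2) (p2.map eA.symm) this
  simpa using congrArg (List.map eA) hnil

lemma twoMinimal_map (s : V) (T : Set V) (h : TwoMinimal tl hd s T) :
    TwoMinimal (fun a2 => eV (tl (eA.symm a2))) (fun a2 => eV (hd (eA.symm a2)))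
      (eV s) (eV '' T) := by
  obtain ⟨h1, h2⟩ := h
  constructor
  · rintro t ⟨t0, ht0, rfl⟩
    rw [lam_map eV eA tl hd s t0]
    exact h1 t0 ht0
  · intro a2
    obtain ⟨t, ht, hlt⟩ := h2 (eA.symm a2)
    refine ⟨eV t, ⟨t, ht, rfl⟩, ?_⟩
    have heq := lam_map eV (restrictEquiv eA a2)
      (fun b : {b : A // b ≠ eA.symm a2} => tl b.1)
      (fun b => hd b.1) s t
    exact heq ▸ hlt

lemma subtreeRel_map {a2 b2 : A2} :
    SubtreeRel (fun a2 => eV (tl (eA.symm a2))) (fun a2 => eV (hd (eA.symm a2))) a2 b2 ↔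
      SubtreeRel tl hd (eA.symm a2) (eA.symm b2) := by
  unfold SubtreeRel
  rw [inDeg_map eV eA hd (hd (eA.symm a2))]
  exact and_congr eV.injective.eq_iff Iff.rfl

/-- the subtree decompositions of isomorphic networks are equivalent. -/
def subtreesEquiv :
    Subtrees (fun a2 => eV (tl (eA.symm a2))) (fun a2 => eV (hd (eA.symm a2))) ≃
      Subtrees tl hd where
  toFun := Quot.lift (fun a2 => Quot.mk _ (eA.symm a2))
    (fun a2 b2 h => Quot.sound ((subtreeRel_map eV eA tl hd).1 h))
  invFun := Quot.lift (fun a => Quot.mk _ (eA a))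
    (fun a b h => Quot.sound ((subtreeRel_map eV eA tl hd).2 (by simpa using h)))
  left_inv := by
    apply Quot.ind
    intro a2
    show Quot.mk _ (eA (eA.symm a2)) = Quot.mk _ a2
    rw [Equiv.apply_symm_apply]
  right_inv := by
    apply Quot.ind
    intro a
    show Quot.mk _ (eA.symm (eA a)) = Quot.mk _ a
    rw [Equiv.symm_apply_apply]

/-- isomorphism of subtree graphs. -/
def subtreeGraphIso :
    subtreeGraph (fun a2 => eV (tl (eA.symm a2))) (fun a2 => eV (hd (eA.symm a2))) ≃g
      subtreeGraph tl hd where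
  toEquiv := subtreesEquiv eV eA tl hd
  map_rel_iff' := by
    intro x y
    obtain ⟨a2, rfl⟩ := Quot.exists_rep x
    obtain ⟨b2, rfl⟩ := Quot.exists_rep y
    show (subtreeGraph tl hd).Adj (Quot.mk _ (eA.symm a2)) (Quot.mk _ (eA.symm b2)) ↔ _
    constructor
    · rintro ⟨hxy, a, b, ha, hb, hab, hdeg⟩
      refine ⟨?_, eA a, eA b, ?_, ?_, ?_, ?_⟩
      · intro heq
        have h2 : (Quot.mk _ (eA.symm a2) : Subtrees tl hd) = Quot.mk _ (eA.symm b2) :=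
          congrArg (subtreesEquiv eV eA tl hd) heq
        exact hxy h2
      · have ha' : (Quot.mk _ (eA a) : Subtrees (fun a2 => eV (tl (eA.symm a2)))
            (fun a2 => eV (hd (eA.symm a2)))) = Quot.mk _ (eA (eA.symm a2)) :=
          congrArg (subtreesEquiv eV eA tl hd).symm ha
        rwa [Equiv.apply_symm_apply] at ha'
      · have hb' : (Quot.mk _ (eA b) : Subtrees (fun a2 => eV (tl (eA.symm a2)))
            (fun a2 => eV (hd (eA.symm a2)))) = Quot.mk _ (eA (eA.symm b2)) :=
          congrArg (subtreesEquiv eV eA tl hd).symm hb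
        rwa [Equiv.apply_symm_apply] at hb'
      · show eV (hd (eA.symm (eA a))) = eV (hd (eA.symm (eA b)))
        rw [Equiv.symm_apply_apply, Equiv.symm_apply_apply, hab]
      · show inDeg (fun a2 => eV (hd (eA.symm a2))) (eV (hd (eA.symm (eA a)))) = 2
        rw [Equiv.symm_apply_apply, inDeg_map eV eA hd]
        exact hdeg
    · rintro ⟨hxy, a2', b2', ha, hb, hab, hdeg⟩
      refine ⟨?_, eA.symm a2', eA.symm b2', ?_, ?_, eV.injective hab, ?_⟩
      · intro heq
        have h2 : (Quot.mk _ (eA (eA.symm a2)) : Subtrees (fun a2 => eV (tl (eA.symm a2)))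
            (fun a2 => eV (hd (eA.symm a2)))) = Quot.mk _ (eA (eA.symm b2)) :=
          congrArg (subtreesEquiv eV eA tl hd).symm heq
        rw [Equiv.apply_symm_apply, Equiv.apply_symm_apply] at h2
        exact hxy h2
      · exact congrArg (subtreesEquiv eV eA tl hd) ha
      · exact congrArg (subtreesEquiv eV eA tl hd) hb
      · rw [← inDeg_map eV eA hd]
        exact hdeg

end Transfer

/-- Theorem 1: every finite simple graph without isolated vertices is
(up to isomorphism) the subtree graph of some 2-minimal acyclic multicast network. -/
theorem exists_network_with_subtreeGraph
    {W : Type} [Fintype W] (H : SimpleGraph W)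
    (hno_isolated : ∀ w : W, ∃ w' : W, H.Adj w w') :
    ∃ (n m : ℕ) (tl hd : Fin m → Fin n) (s : Fin n) (T : Set (Fin n)),
      s ∉ T ∧ Acyclic tl hd ∧ TwoMinimal tl hd s T ∧
      Nonempty (subtreeGraph tl hd ≃g H)    := by
  classical
  haveI : DecidableEq W := Classical.decEq W
  haveI : DecidableRel H.Adj := Classical.decRel _
  haveI : Fintype ↥H.edgeSet := Fintype.ofFinite _
  haveI : Fintype (NV H) := Fintype.ofFinite _
  haveI : Fintype (NA H) := Fintype.ofFinite _
  let eV : NV H ≃ Fin (Fintype.card (NV H)) := Fintype.equivFin _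
  let eA : NA H ≃ Fin (Fintype.card (NA H)) := Fintype.equivFin _
  refine ⟨Fintype.card (NV H), Fintype.card (NA H),
    fun a2 => eV (ntl H (eA.symm a2)), fun a2 => eV (nhd H (eA.symm a2)),
    eV none, eV '' NT H, ?_, ?_, ?_, ?_⟩
  · rintro ⟨t, ⟨e, rfl⟩, hteq⟩
    exact absurd (eV.injective hteq) (by simp)
  · exact acyclic_map eV eA (ntl H) (nhd H) nAcyclic
  · exact twoMinimal_map eV eA (ntl H) (nhd H) none (NT H) (nTwoMinimal hno_isolated)
  · exact ⟨(subtreeGraphIso eV eA (ntl H) (nhd H)).trans nIso⟩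


end NCMinor
end

section
/- Let D be a 2-minimal acyclic multicast network with subtree graph H, and let M be a finite simple graph with minimum degree at least 3. If M is a minor of H, then M is a minor of the underlying topology of D. -/
namespace NCMinor

open Relation

section Aux

variable {tl hd : A → V}

/-- a subtree is *good* if it contains an arc whose head has in-degree 1. -/
def Good (tl hd : A → V) (x : Subtrees tl hd) : Prop :=
  ∃ c : A, Quot.mk (SubtreeRel tl hd) c = x ∧ inDeg hd (hd c) = 1

/-- heads of arcs of the subtree `x` having in-degree 1. -/
def Iset (tl hd : A → V) (x : Subtrees tl hd) : Set V :=
  {w | ∃ c : A, Quot.mk (SubtreeRel tl hd) c = x ∧ hd c = w ∧ inDeg hd w = 1}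

lemma tl_ne_hd (hacyc : Acyclic tl hd) (a : A) : tl a ≠ hd a := by
  intro h
  have hw : IsArcWalk tl hd (tl a) (tl a) [a] := ⟨rfl, h.symm⟩
  simpa using hacyc (tl a) [a] hw

lemma adj_arc (hacyc : Acyclic tl hd) (a : A) : (topology tl hd).Adj (tl a) (hd a) :=
  ⟨tl_ne_hd hacyc a, a, Or.inl ⟨rfl, rfl⟩⟩

lemma unique_arc {u : V} (h1 : inDeg hd u = 1) :
    ∃ a : A, hd a = u ∧ ∀ b : A, hd b = u → b = a := by
  obtain ⟨a, ha⟩ := Set.ncard_eq_one.mp h1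
  obtain ⟨hmem, huni⟩ := Set.eq_singleton_iff_unique_mem.mp ha
  exact ⟨a, hmem, fun b hb => huni b hb⟩

lemma pair_arc {v : V} {a b : A} (h2 : inDeg hd v = 2) (hab : a ≠ b)
    (ha : hd a = v) (hb : hd b = v) : ∀ c : A, hd c = v → c = a ∨ c = b := by
  obtain ⟨p, q, hpq, hset⟩ := Set.ncard_eq_two.mp h2
  have hmem : ∀ x : A, hd x = v → x = p ∨ x = q := by
    intro x hx
    have hx' : x ∈ ({p, q} : Set A) := hset ▸ hx
    simpa using hx'
  intro c hc
  rcases hmem a ha with h | h <;> rcases hmem b hb with h' | h' <;>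
    rcases hmem c hc with h'' | h'' <;> simp_all

lemma bad_eq {x : Subtrees tl hd} (hx : ¬ Good tl hd x) :
    ∀ {e f : A}, EqvGen (SubtreeRel tl hd) e f →
      Quot.mk (SubtreeRel tl hd) e = x → e = f := by
  intro e f h
  induction h with
  | rel e f hef => exact fun he => absurd ⟨e, he, hef.2⟩ hx
  | refl e => exact fun _ => rfl
  | symm e f h ih =>
    intro hf
    have he : Quot.mk (SubtreeRel tl hd) e = x := (Quot.eqvGen_sound h).trans hf
    exact (ih he).symm
  | trans e f g h1 h2 ih1 ih2 =>
    intro he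
    have hf : Quot.mk (SubtreeRel tl hd) f = x := (Quot.eqvGen_sound h1).symm.trans he
    exact (ih1 he).trans (ih2 hf)

lemma bad_singleton {x : Subtrees tl hd} (hx : ¬ Good tl hd x) {a b : A}
    (ha : Quot.mk (SubtreeRel tl hd) a = x) (hb : Quot.mk (SubtreeRel tl hd) b = x) :
    a = b :=
  bad_eq hx (Quot.eq.mp (ha.trans hb.symm)) ha

lemma isolated_eq {a : A} (h1 : inDeg hd (hd a) ≠ 1) (h2 : inDeg hd (tl a) ≠ 1) :
    ∀ {e f : A}, EqvGen (SubtreeRel tl hd) e f → (e = a → f = a) ∧ (f = a → e = a) := by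
  intro e f h
  induction h with
  | rel e f hef =>
    constructor
    · rintro rfl; exact absurd hef.2 h1
    · rintro rfl
      exact absurd (by rw [← hef.1]; exact hef.2) h2
  | refl e => exact ⟨id, id⟩
  | symm e f h ih => exact ⟨ih.2, ih.1⟩
  | trans e f g h1 h2 ih1 ih2 =>
    exact ⟨fun h => ih2.1 (ih1.1 h), fun h => ih1.2 (ih2.2 h)⟩

lemma good_tl {x : Subtrees tl hd} (hx : Good tl hd x) {a : A}
    (ha : Quot.mk (SubtreeRel tl hd) a = x) (h1 : inDeg hd (hd a) ≠ 1) :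
    inDeg hd (tl a) = 1 := by
  by_contra h2
  obtain ⟨c, hc, hcdeg⟩ := hx
  have hca : c = a := (isolated_eq h1 h2 (Quot.eq.mp (ha.trans hc.symm))).1 rfl
  rw [hca] at hcdeg
  exact h1 hcdeg

lemma mem_Iset_tl {x : Subtrees tl hd} {a : A}
    (ha : Quot.mk (SubtreeRel tl hd) a = x) (h1 : inDeg hd (tl a) = 1) :
    tl a ∈ Iset tl hd x := by
  obtain ⟨d, hd1, -⟩ := unique_arc h1
  have hrel : SubtreeRel tl hd d a := ⟨hd1, by rw [hd1]; exact h1⟩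
  exact ⟨d, (Quot.sound hrel).trans ha, hd1, h1⟩

lemma mem_Iset_hd {x : Subtrees tl hd} {a : A}
    (ha : Quot.mk (SubtreeRel tl hd) a = x) (h1 : inDeg hd (hd a) = 1) :
    hd a ∈ Iset tl hd x := ⟨a, ha, rfl, h1⟩

lemma Iset_eq {x y : Subtrees tl hd} {w : V}
    (hx : w ∈ Iset tl hd x) (hy : w ∈ Iset tl hd y) : x = y := by
  obtain ⟨c, hc, hcw, h1⟩ := hx
  obtain ⟨c', hc', hcw', -⟩ := hy
  obtain ⟨d, -, hun⟩ := unique_arc h1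
  rw [← hc, ← hc', hun c hcw, hun c' hcw']

lemma induce_adj {G : SimpleGraph V} {s : Set V} {u v : V} (hu : u ∈ s) (hv : v ∈ s)
    (h : G.Adj u v) : (G.induce s).Adj ⟨u, hu⟩ ⟨v, hv⟩ := h

end Aux

section Main

variable {W : Type} {tl hd : A → V}

/-- good subtrees of a branch set. -/
def Bg (B : W → Set (Subtrees tl hd)) (m : W) : Set (Subtrees tl hd) :=
  {x | x ∈ B m ∧ Good tl hd x}

/-- potential owners of a coding node. -/
def Ov (B : W → Set (Subtrees tl hd)) (v : V) : Set W :=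
  {m | ∃ e : A, hd e = v ∧ Quot.mk (SubtreeRel tl hd) e ∈ Bg B m}

/-- the branch sets in the topology. -/
noncomputable def Dset (B : W → Set (Subtrees tl hd)) (m : W) : Set V :=
  (⋃ x ∈ Bg B m, Iset tl hd x) ∪
  {v | inDeg hd v = 2 ∧ ∃ h : (Ov B v).Nonempty, Exists.choose h = m}

open Classical in
noncomputable def nu (tl hd : A → V) (e : A) : V :=
  if inDeg hd (hd e) = 1 then hd e else tl e

variable {B : W → Set (Subtrees tl hd)}

lemma mem_Dset_of_Iset {m : W} {x : Subtrees tl hd} {w : V}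
    (hx : x ∈ Bg B m) (hw : w ∈ Iset tl hd x) : w ∈ Dset B m :=
  Or.inl (Set.mem_biUnion hx hw)

lemma wit_mem {m : W} {v : V} (h2 : inDeg hd v = 2)
    (hne : (Ov B v).Nonempty) (hall : ∀ m' ∈ Ov B v, m' = m) : v ∈ Dset B m :=
  Or.inr ⟨h2, hne, hall _ (Exists.choose_spec hne)⟩

lemma nu_mem {m : W} {x : Subtrees tl hd} (hx : x ∈ Bg B m) {e : A}
    (he : Quot.mk (SubtreeRel tl hd) e = x) : nu tl hd e ∈ Dset B m := by
  by_cases h1 : inDeg hd (hd e) = 1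
  · have : nu tl hd e = hd e := by simp [nu, h1]
    rw [this]
    exact mem_Dset_of_Iset hx (mem_Iset_hd he h1)
  · have : nu tl hd e = tl e := by simp [nu, h1]
    rw [this]
    exact mem_Dset_of_Iset hx (mem_Iset_tl he (good_tl hx.2 he h1))

lemma nu_reach (hacyc : Acyclic tl hd) {m : W} {x : Subtrees tl hd} (hx : x ∈ Bg B m) :
    ∀ {e f : A}, EqvGen (SubtreeRel tl hd) e f → Quot.mk (SubtreeRel tl hd) e = x →
    ∀ (hu : nu tl hd e ∈ Dset B m) (hw : nu tl hd f ∈ Dset B m),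
      ((topology tl hd).induce (Dset B m)).Reachable ⟨nu tl hd e, hu⟩ ⟨nu tl hd f, hw⟩ := by
  intro e f h
  induction h with
  | rel e f hef =>
    intro he hu hw
    have hnue : nu tl hd e = hd e := by simp [nu, hef.2]
    by_cases h1 : inDeg hd (hd f) = 1
    · have hnuf : nu tl hd f = hd f := by simp [nu, h1]
      apply SimpleGraph.Adj.reachable
      show (topology tl hd).Adj (nu tl hd e) (nu tl hd f)
      rw [hnue, hnuf, hef.1]
      exact adj_arc hacyc f
    · have hnuf : nu tl hd f = tl f := by simp [nu, h1]
      have hpt : (⟨nu tl hd e, hu⟩ : ↥(Dset B m)) = ⟨nu tl hd f, hw⟩ :=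
        Subtype.ext (by show nu tl hd e = nu tl hd f; rw [hnue, hnuf, hef.1])
      rw [hpt]
  | refl e => intro _ _ _; rfl
  | symm e f h ih =>
    intro hf hu hw
    have he : Quot.mk (SubtreeRel tl hd) e = x := (Quot.eqvGen_sound h).trans hf
    exact (ih he hw hu).symm
  | trans e f g h1 h2 ih1 ih2 =>
    intro he hu hw
    have hf : Quot.mk (SubtreeRel tl hd) f = x := (Quot.eqvGen_sound h1).symm.trans he
    exact (ih1 he hu (nu_mem hx hf)).trans (ih2 hf (nu_mem hx hf) hw)

lemma Iset_reach (hacyc : Acyclic tl hd) {m : W} {x : Subtrees tl hd} (hx : x ∈ Bg B m)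
    {u w : V} (hu : u ∈ Iset tl hd x) (hw : w ∈ Iset tl hd x)
    (hu' : u ∈ Dset B m) (hw' : w ∈ Dset B m) :
    ((topology tl hd).induce (Dset B m)).Reachable ⟨u, hu'⟩ ⟨w, hw'⟩ := by
  obtain ⟨b, hb, hbw, hb1⟩ := hu
  obtain ⟨c, hc, hcw, hc1⟩ := hw
  have hbc : EqvGen (SubtreeRel tl hd) b c := Quot.eq.mp (hb.trans hc.symm)
  have h1 : nu tl hd b = u := by simp [nu, hbw, hb1]
  have h2 : nu tl hd c = w := by simp [nu, hcw, hc1]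
  have e1 : (⟨u, hu'⟩ : ↥(Dset B m)) = ⟨nu tl hd b, nu_mem hx hb⟩ := Subtype.ext h1.symm
  have e2 : (⟨w, hw'⟩ : ↥(Dset B m)) =
      ⟨nu tl hd c, nu_mem hx ((Quot.eqvGen_sound hbc).symm.trans hb)⟩ := Subtype.ext h2.symm
  rw [e1, e2]
  exact nu_reach hacyc hx hbc hb _ _

lemma bad_unique {x y z : Subtrees tl hd} (hx : ¬ Good tl hd x)
    (h1 : (subtreeGraph tl hd).Adj x y) (h2 : (subtreeGraph tl hd).Adj x z) : y = z := by
  obtain ⟨ne1, a, b, ha, hb, hab, hdeg⟩ := h1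
  obtain ⟨ne2, a', b', ha', hb', hab', hdeg'⟩ := h2
  have haa : a' = a := bad_singleton hx ha' ha
  have hvb : hd b' = hd a := by rw [← hab', haa]
  have hba : a ≠ b := fun h => ne1 (by rw [← ha, ← hb, h])
  rcases pair_arc hdeg hba rfl hab.symm b' hvb with h | h
  · have : z = x := by rw [← hb', h, ha]
    exact (ne2 this.symm).elim
  · rw [← hb', h, hb]

lemma wit_mem_internal (hdisj : Pairwise fun m m' => Disjoint (B m) (B m'))
    {m : W} {x y : Subtrees tl hd} (hx : x ∈ Bg B m) (hy : y ∈ Bg B m) (hxy : x ≠ y)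
    {a b : A} (ha : Quot.mk (SubtreeRel tl hd) a = x) (hb : Quot.mk (SubtreeRel tl hd) b = y)
    (hv : hd a = hd b) (h2 : inDeg hd (hd a) = 2) : hd a ∈ Dset B m := by
  have hab : a ≠ b := fun h => hxy (by rw [← ha, ← hb, h])
  apply wit_mem h2 ⟨m, a, rfl, by rw [ha]; exact hx⟩
  rintro m' ⟨e, he, heB⟩
  rcases pair_arc h2 hab rfl hv.symm e he with h | h
  · rw [h, ha] at heB
    by_contra hmn
    exact Set.disjoint_left.mp (hdisj hmn) heB.1 hx.1
  · rw [h, hb] at heB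
    by_contra hmn
    exact Set.disjoint_left.mp (hdisj hmn) heB.1 hy.1

lemma walk_reach (hacyc : Acyclic tl hd)
    (hdisj : Pairwise fun m m' => Disjoint (B m) (B m')) {m : W} :
    ∀ (xs ys : ↥(Bg B m)) (_ : ((subtreeGraph tl hd).induce (Bg B m)).Walk xs ys)
      {u w : V} (_ : u ∈ Iset tl hd xs.1) (_ : w ∈ Iset tl hd ys.1)
      (hu' : u ∈ Dset B m) (hw' : w ∈ Dset B m),
      ((topology tl hd).induce (Dset B m)).Reachable ⟨u, hu'⟩ ⟨w, hw'⟩ := by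
  intro xs ys p
  induction p with
  | @nil xs' => exact fun hu hw hu' hw' => Iset_reach hacyc xs'.2 hu hw hu' hw'
  | @cons xs zs ys h q ih =>
    intro u w hu hw hu' hw'
    have hxz : (subtreeGraph tl hd).Adj xs.1 zs.1 := h
    obtain ⟨hxy, a, b, ha, hb, hv, h2⟩ := hxz
    have h2b : inDeg hd (hd b) = 2 := hv ▸ h2
    have hta : tl a ∈ Iset tl hd xs.1 :=
      mem_Iset_tl ha (good_tl xs.2.2 ha (by simp [h2]))
    have htb : tl b ∈ Iset tl hd zs.1 :=
      mem_Iset_tl hb (good_tl zs.2.2 hb (by simp [h2b]))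
    have hta' : tl a ∈ Dset B m := mem_Dset_of_Iset xs.2 hta
    have htb' : tl b ∈ Dset B m := mem_Dset_of_Iset zs.2 htb
    have hvD : hd a ∈ Dset B m := wit_mem_internal hdisj xs.2 zs.2 hxy ha hb hv h2
    have r1 := Iset_reach hacyc xs.2 hu hta hu' hta'
    have s1 : ((topology tl hd).induce (Dset B m)).Adj ⟨tl a, hta'⟩ ⟨hd a, hvD⟩ :=
      induce_adj hta' hvD (adj_arc hacyc a)
    have s2 : ((topology tl hd).induce (Dset B m)).Adj ⟨hd a, hvD⟩ ⟨tl b, htb'⟩ := by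
      apply induce_adj hvD htb'
      rw [hv]
      exact (adj_arc hacyc b).symm
    have r2 := ih htb hw htb' hw'
    exact ((r1.trans s1.reachable).trans s2.reachable).trans r2

lemma prune_reach (hdisj : Pairwise fun m m' => Disjoint (B m) (B m')) {m : W} :
    ∀ (n : ℕ) (u v : ↥(B m)) (p : ((subtreeGraph tl hd).induce (B m)).Walk u v),
      p.length ≤ n → ∀ (hu : Good tl hd u.1) (hv : Good tl hd v.1),
      ((subtreeGraph tl hd).induce (Bg B m)).Reachable ⟨u.1, u.2, hu⟩ ⟨v.1, v.2, hv⟩ := by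
  intro n
  induction n with
  | zero =>
    intro u v p hlen hu hv
    cases p with
    | nil => exact SimpleGraph.Reachable.refl _
    | cons h q => simp [SimpleGraph.Walk.length_cons] at hlen
  | succ n ih =>
    intro u v p hlen hu hv
    cases p with
    | nil => exact SimpleGraph.Reachable.refl _
    | @cons _ z _ h q =>
      by_cases hz : Good tl hd z.1
      · have hstep : ((subtreeGraph tl hd).induce (Bg B m)).Adj ⟨u.1, u.2, hu⟩ ⟨z.1, z.2, hz⟩ :=
          induce_adj _ _ (h : (subtreeGraph tl hd).Adj u.1 z.1)
        have hq : q.length ≤ n := by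
          simp [SimpleGraph.Walk.length_cons] at hlen; omega
        exact hstep.reachable.trans (ih z v q hq hz hv)
      · cases q with
        | nil => exact absurd hv hz
        | @cons _ z2 _ h2 q' =>
          have hadj1 : (subtreeGraph tl hd).Adj z.1 u.1 :=
            ((h : (subtreeGraph tl hd).Adj u.1 z.1)).symm
          have hadj2 : (subtreeGraph tl hd).Adj z.1 z2.1 := h2
          have hz2u : u.1 = z2.1 := bad_unique hz hadj1 hadj2
          have hz2 : z2 = u := Subtype.ext hz2u.symm
          have hq' : (q'.copy hz2 rfl).length ≤ n := by
            rw [SimpleGraph.Walk.length_copy]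
            simp [SimpleGraph.Walk.length_cons] at hlen
            omega
          exact ih u v (q'.copy hz2 rfl) hq' hu hv

lemma good_of_cross [Finite W] {M : SimpleGraph W}
    (hconn : ∀ m, ((subtreeGraph tl hd).induce (B m)).Connected)
    (hdisj : Pairwise fun m m' => Disjoint (B m) (B m'))
    (hedge : ∀ m m', M.Adj m m' → ∃ u ∈ B m, ∃ v ∈ B m', (subtreeGraph tl hd).Adj u v)
    (hdeg : ∀ w : W, 3 ≤ (M.neighborSet w).ncard)
    {m m' : W} (hmm : m ≠ m') {x y : Subtrees tl hd} (hx : x ∈ B m) (hy : y ∈ B m')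
    (hadj : (subtreeGraph tl hd).Adj x y) : Good tl hd x := by
  by_contra hbad
  have huniq : ∀ z, (subtreeGraph tl hd).Adj x z → z = y := fun z hz =>
    bad_unique hbad hz hadj
  by_cases hsing : ∀ x'' ∈ B m, x'' = x
  · have h3 : 1 < (M.neighborSet m).ncard := by have := hdeg m; omega
    obtain ⟨m₁, hm₁, m₂, hm₂, hne12⟩ := (Set.one_lt_ncard (Set.toFinite _)).mp h3
    obtain ⟨u₁, hu₁, v₁, hv₁, hadj₁⟩ := hedge m m₁ hm₁
    obtain ⟨u₂, hu₂, v₂, hv₂, hadj₂⟩ := hedge m m₂ hm₂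
    rw [hsing u₁ hu₁] at hadj₁
    rw [hsing u₂ hu₂] at hadj₂
    rw [huniq v₁ hadj₁] at hv₁
    rw [huniq v₂ hadj₂] at hv₂
    exact Set.disjoint_left.mp (hdisj hne12) hv₁ hv₂
  · push_neg at hsing
    obtain ⟨x'', hx''B, hxne⟩ := hsing
    have key : ∀ (a b : ↥(B m)) (_ : ((subtreeGraph tl hd).induce (B m)).Walk a b),
        a.1 = x → b.1 = x'' → False := by
      intro a b p
      induction p with
      | nil => exact fun h1 h2 => hxne (h2.symm.trans h1)
      | @cons a z b h q ih =>
        intro h1 _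
        have hadjH : (subtreeGraph tl hd).Adj x z.1 := by
          rw [← h1]; exact h
        have hzy : z.1 = y := huniq z.1 hadjH
        have : y ∈ B m := by rw [← hzy]; exact z.2
        exact Set.disjoint_left.mp (hdisj hmm) this hy
    obtain ⟨p⟩ := (hconn m).preconnected ⟨x, hx⟩ ⟨x'', hx''B⟩
    exact key _ _ p rfl rfl

lemma red_reach (hacyc : Acyclic tl hd) {m : W} :
    ∀ (u : V) (hu : u ∈ Dset B m), ∃ (x : Subtrees tl hd) (hx : x ∈ Bg B m) (w : V)
      (_ : w ∈ Iset tl hd x) (hw' : w ∈ Dset B m),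
      ((topology tl hd).induce (Dset B m)).Reachable ⟨u, hu⟩ ⟨w, hw'⟩ := by
  intro u hu
  rcases hu with h | h
  · obtain ⟨x, hx, hw⟩ := Set.mem_iUnion₂.mp h
    exact ⟨x, hx, u, hw, Or.inl (Set.mem_biUnion hx hw), SimpleGraph.Reachable.refl _⟩
  · obtain ⟨h2, hne, hch⟩ := h
    have hspec := Exists.choose_spec hne
    rw [hch] at hspec
    obtain ⟨e, he, heB⟩ := hspec
    have h1' : inDeg hd (hd e) ≠ 1 := by rw [he, h2]; omega
    have htl : inDeg hd (tl e) = 1 := good_tl heB.2 rfl h1'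
    have hw : tl e ∈ Iset tl hd (Quot.mk (SubtreeRel tl hd) e) := mem_Iset_tl rfl htl
    have hw' : tl e ∈ Dset B m := mem_Dset_of_Iset heB hw
    have hadj : ((topology tl hd).induce (Dset B m)).Adj ⟨u, Or.inr ⟨h2, hne, hch⟩⟩ ⟨tl e, hw'⟩ := by
      apply induce_adj
      rw [← he]
      exact (adj_arc hacyc e).symm
    exact ⟨_, heB, tl e, hw, hw', hadj.reachable⟩

end Main

/-- Theorem 3: for a 2-minimal acyclic multicast network, any minor
`M` of minimum degree at least 3 of the subtree graph is also a minor of the underlying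
topology of the network. -/
theorem minor_topology_of_minor_subtreeGraph
    {V A : Type} [Fintype V] [Fintype A] (tl hd : A → V) (s : V) (T : Set V)
    (hsT : s ∉ T) (hacyc : Acyclic tl hd) (hmin : TwoMinimal tl hd s T)
    {W : Type} [Fintype W] (M : SimpleGraph W)
    (hdeg : ∀ w : W, 3 ≤ (M.neighborSet w).ncard)
    (hminor : IsMinor M (subtreeGraph tl hd)) :
    IsMinor M (topology tl hd) := by
  classical
  obtain ⟨B, hconn, hdisj, hedge⟩ := hminor
  have hgood : ∀ {m m' : W}, m ≠ m' → ∀ {x y : Subtrees tl hd}, x ∈ B m → y ∈ B m' →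
      (subtreeGraph tl hd).Adj x y → Good tl hd x := by
    intro m m' hmm x y hx hy hadj
    exact good_of_cross hconn hdisj hedge hdeg hmm hx hy hadj
  have hBg : ∀ m : W, ∃ x, x ∈ Bg B m := by
    intro m
    have h0 := hdeg m
    obtain ⟨m₁, hm₁⟩ := Set.nonempty_of_ncard_ne_zero (s := M.neighborSet m) (by omega)
    obtain ⟨u, hu, v, hv, h⟩ := hedge m m₁ hm₁
    exact ⟨u, hu, hgood (SimpleGraph.Adj.ne hm₁) hu hv h⟩
  refine ⟨Dset B, ?_, ?_, ?_⟩
  · intro m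
    obtain ⟨x₀, hx₀⟩ := hBg m
    obtain ⟨c₀, hc₀, hdeg₀⟩ := hx₀.2
    have hw₀ : hd c₀ ∈ Iset tl hd x₀ := mem_Iset_hd hc₀ hdeg₀
    rw [SimpleGraph.connected_iff]
    refine ⟨?_, ⟨⟨hd c₀, mem_Dset_of_Iset hx₀ hw₀⟩⟩⟩
    rintro ⟨p, hp⟩ ⟨q, hq⟩
    obtain ⟨x, hx, wp, hwp, hwp', rp⟩ := red_reach hacyc p hp
    obtain ⟨y, hy, wq, hwq, hwq', rq⟩ := red_reach hacyc q hq
    have hgr : ((subtreeGraph tl hd).induce (Bg B m)).Reachable ⟨x, hx⟩ ⟨y, hy⟩ := by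
      obtain ⟨pw⟩ := (hconn m).preconnected ⟨x, hx.1⟩ ⟨y, hy.1⟩
      exact prune_reach hdisj pw.length ⟨x, hx.1⟩ ⟨y, hy.1⟩ pw le_rfl hx.2 hy.2
    obtain ⟨pw'⟩ := hgr
    have hmid := walk_reach hacyc hdisj ⟨x, hx⟩ ⟨y, hy⟩ pw' hwp hwq hwp' hwq'
    exact (rp.trans hmid).trans rq.symm
  · intro m m' hne
    rw [Set.disjoint_left]
    rintro u hum hum'
    rcases hum with h | h <;> rcases hum' with h' | h'
    · obtain ⟨x, hx, hw⟩ := Set.mem_iUnion₂.mp h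
      obtain ⟨y, hy, hw'⟩ := Set.mem_iUnion₂.mp h'
      have hxy : x = y := Iset_eq hw hw'
      rw [hxy] at hx
      exact Set.disjoint_left.mp (hdisj hne) hx.1 hy.1
    · obtain ⟨x, hx, hw⟩ := Set.mem_iUnion₂.mp h
      obtain ⟨c, -, -, h1⟩ := hw
      have h2 := h'.1
      omega
    · obtain ⟨x, hx, hw⟩ := Set.mem_iUnion₂.mp h'
      obtain ⟨c, -, -, h1⟩ := hw
      have h2 := h.1
      omega
    · obtain ⟨-, hne1, hch1⟩ := h
      obtain ⟨-, hne2, hch2⟩ := h'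
      have heq : hne1 = hne2 := Subsingleton.elim _ _
      rw [heq] at hch1
      exact hne (hch1.symm.trans hch2)
  · intro m m' hadjM
    obtain ⟨x, hxB, y, hyB, hadjH⟩ := hedge m m' hadjM
    have hmm : m ≠ m' := SimpleGraph.Adj.ne hadjM
    have hgx : Good tl hd x := hgood hmm hxB hyB hadjH
    have hgy : Good tl hd y := hgood hmm.symm hyB hxB hadjH.symm
    have hx : x ∈ Bg B m := ⟨hxB, hgx⟩
    have hy : y ∈ Bg B m' := ⟨hyB, hgy⟩
    obtain ⟨ne1, a, b, ha, hb, hv, h2⟩ := hadjH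
    have h2b : inDeg hd (hd b) = 2 := hv ▸ h2
    have hta : tl a ∈ Iset tl hd x := mem_Iset_tl ha (good_tl hgx ha (by simp [h2]))
    have htb : tl b ∈ Iset tl hd y := mem_Iset_tl hb (good_tl hgy hb (by simp [h2b]))
    have hab : a ≠ b := fun hh => ne1 (by rw [← ha, ← hb, hh])
    have hvne : (Ov B (hd a)).Nonempty := ⟨m, a, rfl, by rw [ha]; exact hx⟩
    obtain ⟨e, he, heB⟩ := Exists.choose_spec hvne
    rcases pair_arc h2 hab rfl hv.symm e he with hea | heb
    · have hcm : Exists.choose hvne = m := by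
        by_contra hc
        rw [hea, ha] at heB
        exact Set.disjoint_left.mp (hdisj hc) heB.1 hxB
      refine ⟨hd a, Or.inr ⟨h2, hvne, hcm⟩, tl b, mem_Dset_of_Iset hy htb, ?_⟩
      rw [hv]
      exact (adj_arc hacyc b).symm
    · have hcm : Exists.choose hvne = m' := by
        by_contra hc
        rw [heb, hb] at heB
        exact Set.disjoint_left.mp (hdisj hc) heB.1 hyB
      exact ⟨tl a, mem_Dset_of_Iset hx hta, hd a, Or.inr ⟨h2, hvne, hcm⟩, adj_arc hacyc a⟩


end NCMinor
end
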